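/- arXiv:2303.12240 — 2 statements merged into one kernel-verified Lean document; each statement's English description precedes it below -/
import Mathlib

section
/- The bijection ρ from plane trees with n edges to noncrossing partitions of [n] intertwines the cyclic shift with Kreweras complementation: ρ(φ(T)) = κ(ρ(T)) for every plane tree T with n edges. -/
/-- A plane tree: a root with a linearly ordered list of subtrees. -/
inductive PlaneTree : Type
  | node : List PlaneTree → PlaneTree

/-- Number of edges of a plane tree. -/
def PlaneTree.edges : PlaneTree → ℕ
  | .node ts => (ts.attach.map fun t => t.1.edges + 1).sum
decreasing_by
  have := List.sizeOf_lt_of_mem t.2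
  simp only [PlaneTree.node.sizeOf_spec] at *
  omega

/-- Boundary labeling of a forest starting at label `i`: each edge of the
tree receives the labels on its left and right sides. -/
def matchList : ℕ → List PlaneTree → Finset (ℕ × ℕ)
  | _, [] => ∅
  | i, PlaneTree.node cs :: ts =>
    insert (i, i + 2 * (PlaneTree.node cs).edges + 1)
      (matchList (i + 1) cs ∪ matchList (i + 2 * (PlaneTree.node cs).edges + 2) ts)
termination_by i ts => sizeOf ts

/-- The noncrossing perfect matching on `{1,…,2n}` encoding a plane tree with
`n` edges, via the boundary labeling `1,…,2n` counter-clockwise from the root. -/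
def PlaneTree.toMatching : PlaneTree → Finset (ℕ × ℕ)
  | .node ts => matchList 1 ts

/-- `M` is a perfect matching of `{1,…,2n}`, with pairs written `(i,j)`, `i < j`. -/
def IsMatching (n : ℕ) (M : Finset (ℕ × ℕ)) : Prop :=
  (∀ p ∈ M, 1 ≤ p.1 ∧ p.1 < p.2 ∧ p.2 ≤ 2 * n) ∧
  ∀ k, 1 ≤ k → k ≤ 2 * n → ∃! p : ℕ × ℕ, p ∈ M ∧ (p.1 = k ∨ p.2 = k)

/-- `M` is a noncrossing perfect matching of `{1,…,2n}`. -/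
def IsNoncrossingMatching (n : ℕ) (M : Finset (ℕ × ℕ)) : Prop :=
  IsMatching n M ∧ ¬ ∃ a b c d : ℕ, a < b ∧ b < c ∧ c < d ∧ (a, c) ∈ M ∧ (b, d) ∈ M

/-- The cyclic index-shift map `φ` on matchings: shift all indices down by one,
with `1 ↦ 2n`. -/
def phi (n : ℕ) (M : Finset (ℕ × ℕ)) : Finset (ℕ × ℕ) :=
  ((M.filter fun p => p.1 = 1).image fun p => (p.2 - 1, 2 * n)) ∪
  ((M.filter fun p => p.1 ≠ 1).image fun p => (p.1 - 1, p.2 - 1))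

/-- A partition of `{1,…,n}` (as `Fin n`) is noncrossing if there are no
`a < b < c < d` with `a, c` in one block and `b, d` in a different block. -/
def IsNoncrossing {n : ℕ} (P : Finpartition (Finset.univ : Finset (Fin n))) : Prop :=
  ¬ ∃ a b c d : Fin n, a < b ∧ b < c ∧ c < d ∧
    P.part a = P.part c ∧ P.part b = P.part d ∧ P.part a ≠ P.part b

/-- The set `NC(n)` of noncrossing partitions of `{1,…,n}`. -/
abbrev NCP (n : ℕ) := {P : Finpartition (Finset.univ : Finset (Fin n)) // IsNoncrossing P}

/-- In the interleaved order `1 < 1' < 2 < 2' < … < n < n'` (element `i` of the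
first copy sits at position `2i`, of the second copy at position `2i+1`),
positions `x` and `y` lie in the same block of the union `P ∪ Q`, where `P`
lives on the first copy and `Q` on the second. -/
def JointSame {n : ℕ} (P Q : Finpartition (Finset.univ : Finset (Fin n))) (x y : ℕ) : Prop :=
  ∃ i j : Fin n,
    (x = 2 * i.val ∧ y = 2 * j.val ∧ P.part i = P.part j) ∨
    (x = 2 * i.val + 1 ∧ y = 2 * j.val + 1 ∧ Q.part i = Q.part j)

/-- `P ∪ Q` is a noncrossing partition of the interleaved totally ordered set. -/
def JointNoncrossing {n : ℕ} (P Q : Finpartition (Finset.univ : Finset (Fin n))) : Prop :=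
  ¬ ∃ a b c d : ℕ, a < b ∧ b < c ∧ c < d ∧
    JointSame P Q a c ∧ JointSame P Q b d ∧ ¬ JointSame P Q a b

/-- `k` is the Kreweras complementation map on `NC(n)`: `k P` is the coarsest
noncrossing partition on the second copy of `{1,…,n}` such that `P ∪ k P` is
noncrossing on the interleaved set. -/
def IsKreweras {n : ℕ} (k : NCP n → NCP n) : Prop :=
  ∀ P : NCP n, JointNoncrossing P.1 (k P).1 ∧
    ∀ Q : NCP n, JointNoncrossing P.1 Q.1 → Q.1 ≤ (k P).1

/-- Adjacency via a chord set: `a` and `b` are joined by a chord of `S`. -/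
def ChordAdj (S : Finset (ℕ × ℕ)) (a b : ℕ) : Prop := (a, b) ∈ S ∨ (b, a) ∈ S

/-- Connectivity via chords of `S`. -/
def ChordConn (S : Finset (ℕ × ℕ)) (a b : ℕ) : Prop :=
  Relation.ReflTransGen (ChordAdj S) a b

/-- Two noncrossing perfect matchings on `{1,…,2n}` form a meander: drawing one
above and one below the line yields a single closed loop, i.e. the union of
their chords connects all `2n` points. -/
def FormMeander (n : ℕ) (M M' : Finset (ℕ × ℕ)) : Prop :=
  ∀ k l : ℕ, 1 ≤ k → k ≤ 2 * n → 1 ≤ l → l ≤ 2 * n → ChordConn (M ∪ M') k l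

/-- The least period of `x` under `f` is `l`. -/
def OrbitLen {α : Type*} (f : α → α) (x : α) (l : ℕ) : Prop :=
  0 < l ∧ f^[l] x = x ∧ ∀ m : ℕ, 0 < m → f^[m] x = x → l ≤ m

/-- The bottom "star" tree matching `{(1,2n)} ∪ {(2i,2i+1) : 1 ≤ i ≤ n-1}`. -/
def btn (n : ℕ) : Finset (ℕ × ℕ) :=
  insert (1, 2 * n) ((Finset.range (n - 1)).image fun i => (2 * i + 2, 2 * i + 3))

/-- `P` is the image `ρ(T)` of the plane tree encoded by the matching `M`:
indices `i, j ∈ {1,…,n}` lie in the same block of `P` exactly when the odd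
labels `2i-1` and `2j-1` lie on the same closed loop of `M` overlaid with the
star matching `btn n`, i.e. in the same part of the tree partition of `M`. -/
def IsRho (n : ℕ) (M : Finset (ℕ × ℕ))
    (P : Finpartition (Finset.univ : Finset (Fin n))) : Prop :=
  ∀ i j : Fin n, P.part i = P.part j ↔
    ChordConn (M ∪ btn n) (2 * i.val + 1) (2 * j.val + 1)

namespace NCAux

/-- The top matching `{(2i+1, 2i+2) : 0 ≤ i ≤ n-1}`. -/
def ee (n : ℕ) : Finset (ℕ × ℕ) := (Finset.range n).image fun i => (2 * i + 1, 2 * i + 2)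

lemma chordAdj_symm {S : Finset (ℕ × ℕ)} {a b : ℕ} (h : ChordAdj S a b) : ChordAdj S b a :=
  h.symm

lemma chordConn_symm {S : Finset (ℕ × ℕ)} {a b : ℕ} (h : ChordConn S a b) : ChordConn S b a := by
  induction h with
  | refl => exact .refl
  | tail _ hadj ih => exact Relation.ReflTransGen.trans (.single hadj.symm) ih

lemma conn_map {S S' : Finset (ℕ × ℕ)} (f : ℕ → ℕ)
    (h : ∀ a b, ChordAdj S a b → ChordConn S' (f a) (f b)) {a b : ℕ} :
    ChordConn S a b → ChordConn S' (f a) (f b) := by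
  intro hc
  induction hc with
  | refl => exact .refl
  | tail _ hadj ih => exact ih.trans (h _ _ hadj)

lemma mem_btn {n : ℕ} {p : ℕ × ℕ} :
    p ∈ btn n ↔ p = (1, 2 * n) ∨ ∃ i < n - 1, p = (2 * i + 2, 2 * i + 3) := by
  simp [btn, eq_comm]

lemma mem_ee {n : ℕ} {p : ℕ × ℕ} :
    p ∈ ee n ↔ ∃ i < n, p = (2 * i + 1, 2 * i + 2) := by
  simp [ee, eq_comm]

/-- Bounds for btn chords. -/
lemma btn_bounds {n : ℕ} {a b : ℕ} (h : (a, b) ∈ btn n) (hn : 1 ≤ n) :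
    1 ≤ a ∧ a < b ∧ b ≤ 2 * n := by
  rcases mem_btn.1 h with h | ⟨i, hi, h⟩ <;>
    · rw [Prod.ext_iff] at h; simp at h; omega

lemma ee_bounds {n : ℕ} {a b : ℕ} (h : (a, b) ∈ ee n) :
    1 ≤ a ∧ a < b ∧ b ≤ 2 * n := by
  rcases mem_ee.1 h with ⟨i, hi, h⟩
  rw [Prod.ext_iff] at h; simp at h; omega

/-- Label shift for deleting the two labels `t, t+1`. -/
def dd (t x : ℕ) : ℕ := if t + 1 < x then x - 2 else x

/-- Lift inverse to `dd`. -/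
def lf (t k : ℕ) : ℕ := if k < t then k else k + 2

/-- Deletion of the chord `(t, t+1)` from a matching, relabeling. -/
def del (t : ℕ) (M : Finset (ℕ × ℕ)) : Finset (ℕ × ℕ) :=
  (M.erase (t, t + 1)).image fun p => (dd t p.1, dd t p.2)

lemma mem_del {t : ℕ} {M : Finset (ℕ × ℕ)} {q : ℕ × ℕ} :
    q ∈ del t M ↔ ∃ p ∈ M, p ≠ (t, t + 1) ∧ q = (dd t p.1, dd t p.2) := by
  simp only [del, Finset.mem_image, Finset.mem_erase]
  constructor
  · rintro ⟨p, ⟨h1, h2⟩, h3⟩; exact ⟨p, h2, h1, h3.symm⟩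
  · rintro ⟨p, h2, h1, h3⟩; exact ⟨p, ⟨h1, h2⟩, h3.symm⟩

section Matching

variable {n : ℕ} {M : Finset (ℕ × ℕ)}

lemma exists_innermost (hM : IsNoncrossingMatching n M) (hn : 1 ≤ n) :
    ∃ t, (t, t + 1) ∈ M := by
  obtain ⟨hb, hcov⟩ := hM.1
  obtain ⟨p0, ⟨hp0, _⟩, _⟩ := hcov 1 le_rfl (by omega)
  obtain ⟨p, hp, hmin⟩ := M.exists_min_image (fun p => p.2 - p.1) ⟨p0, hp0⟩
  obtain ⟨a, b⟩ := p
  have hab := hb _ hp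
  simp only at hab hmin
  by_cases hb1 : b = a + 1
  · exact ⟨a, by rwa [← hb1]⟩
  exfalso
  have hk : 1 ≤ a + 1 ∧ a + 1 ≤ 2 * n := by omega
  obtain ⟨q, ⟨hq, hqc⟩, huniq⟩ := hcov (a + 1) hk.1 hk.2
  obtain ⟨c, d⟩ := q
  have hcd := hb _ hq
  simp only at hqc hcd
  rcases hqc with hc | hd
  · -- c = a + 1
    subst hc
    have hdb : d ≠ b := by
      intro h
      obtain ⟨r, _, hu2⟩ := hcov b (by omega) (by omega)
      have e1 := hu2 (a, b) ⟨hp, Or.inr rfl⟩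
      have e2 := hu2 (a + 1, d) ⟨hq, Or.inr h⟩
      have e3 := e2.trans e1.symm
      simp [Prod.ext_iff] at e3
    rcases lt_or_gt_of_ne hdb with h | h
    · have := hmin (a+1, d) hq; simp at this; omega
    · exact hM.2 ⟨a, a + 1, b, d, by omega, by omega, by omega, hp, hq⟩
  · -- d = a + 1
    subst hd
    have hca : c ≠ a := by
      intro h
      obtain ⟨r, _, hu2⟩ := hcov a (by omega) (by omega)
      have e1 := hu2 (a, b) ⟨hp, Or.inl rfl⟩
      have e2 := hu2 (c, a + 1) ⟨hq, Or.inl h⟩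
      have e3 := e2.trans e1.symm
      simp [Prod.ext_iff] at e3
      omega
    have : c < a := by omega
    exact hM.2 ⟨c, a, a + 1, b, by omega, by omega, by omega, hq, hp⟩

variable {t : ℕ}

lemma touch (hM : IsNoncrossingMatching n M) (ht : (t, t + 1) ∈ M)
    {p : ℕ × ℕ} (hp : p ∈ M) (h : p.1 = t ∨ p.1 = t + 1 ∨ p.2 = t ∨ p.2 = t + 1) :
    p = (t, t + 1) := by
  obtain ⟨hb, hcov⟩ := hM.1
  have htb : 1 ≤ t ∧ t < t + 1 ∧ t + 1 ≤ 2 * n := hb _ ht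
  rcases h with h | h | h | h
  · obtain ⟨q, _, huniq⟩ := hcov t (by omega) (by omega)
    rw [huniq p ⟨hp, Or.inl h⟩, huniq (t, t+1) ⟨ht, Or.inl rfl⟩]
  · obtain ⟨q, _, huniq⟩ := hcov (t+1) (by omega) (by omega)
    rw [huniq p ⟨hp, Or.inl h⟩, huniq (t, t+1) ⟨ht, Or.inr rfl⟩]
  · obtain ⟨q, _, huniq⟩ := hcov t (by omega) (by omega)
    rw [huniq p ⟨hp, Or.inr h⟩, huniq (t, t+1) ⟨ht, Or.inl rfl⟩]
  · obtain ⟨q, _, huniq⟩ := hcov (t+1) (by omega) (by omega)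
    rw [huniq p ⟨hp, Or.inr h⟩, huniq (t, t+1) ⟨ht, Or.inr rfl⟩]

lemma notouch (hM : IsNoncrossingMatching n M) (ht : (t, t + 1) ∈ M)
    {p : ℕ × ℕ} (hp : p ∈ M) (hne : p ≠ (t, t + 1)) :
    p.1 ≠ t ∧ p.1 ≠ t + 1 ∧ p.2 ≠ t ∧ p.2 ≠ t + 1 := by
  refine ⟨?_, ?_, ?_, ?_⟩ <;> intro h <;> exact hne (touch hM ht hp (by tauto))

lemma t_bounds (hM : IsNoncrossingMatching n M) (ht : (t, t + 1) ∈ M) :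
    1 ≤ t ∧ t + 1 ≤ 2 * n := by
  have := hM.1.1 _ ht; simp only at this; omega

lemma del_isNCM (hM : IsNoncrossingMatching n M) (ht : (t, t + 1) ∈ M) :
    IsNoncrossingMatching (n - 1) (del t M) := by
  obtain ⟨⟨hb, hcov⟩, hnc⟩ := hM
  have htb : 1 ≤ t ∧ t < t + 1 ∧ t + 1 ≤ 2 * n := hb _ ht
  refine ⟨⟨?_, ?_⟩, ?_⟩
  · rintro q hq
    obtain ⟨p, hp, hne, rfl⟩ := mem_del.1 hq
    have hpb := hb _ hp
    have hnt := notouch ⟨⟨hb, hcov⟩, hnc⟩ ht hp hne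
    show 1 ≤ dd t p.1 ∧ dd t p.1 < dd t p.2 ∧ dd t p.2 ≤ 2 * (n - 1)
    simp only [dd]
    split_ifs <;> omega
  · intro k hk1 hk2
    have hu : lf t k ∉ ({t, t+1} : Set ℕ) ∧ 1 ≤ lf t k ∧ lf t k ≤ 2 * n := by
      simp only [lf, Set.mem_insert_iff, Set.mem_singleton_iff]
      split_ifs <;> constructor <;> try omega
      all_goals push_neg; omega
    obtain ⟨q, ⟨hq, hqc⟩, huniq⟩ := hcov (lf t k) hu.2.1 hu.2.2
    have hqne : q ≠ (t, t + 1) := by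
      rintro rfl
      simp only [Set.mem_insert_iff, Set.mem_singleton_iff] at hu
      rcases hqc with h | h
      · exact hu.1 (Or.inl h.symm)
      · exact hu.1 (Or.inr h.symm)
    have hddlf : dd t (lf t k) = k := by
      simp only [dd, lf]; split_ifs <;> omega
    refine ⟨(dd t q.1, dd t q.2), ⟨mem_del.2 ⟨q, hq, hqne, rfl⟩, ?_⟩, ?_⟩
    · rcases hqc with h | h
      · exact Or.inl (by rw [h, hddlf])
      · exact Or.inr (by rw [h, hddlf])
    · rintro q' ⟨hq', hq'c⟩
      obtain ⟨p, hp, hne, rfl⟩ := mem_del.1 hq'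
      have hnt := notouch ⟨⟨hb, hcov⟩, hnc⟩ ht hp hne
      have hpb := hb _ hp
      have hlf : ∀ x, x ≠ t → x ≠ t + 1 → dd t x = k → x = lf t k := by
        intro x hx1 hx2 hx3
        simp only [dd] at hx3; simp only [lf]
        split_ifs at hx3 ⊢ <;> omega
      have : p = q := by
        apply huniq
        refine ⟨hp, ?_⟩
        rcases hq'c with h | h
        · exact Or.inl (hlf _ hnt.1 hnt.2.1 h)
        · exact Or.inr (hlf _ hnt.2.2.1 hnt.2.2.2 h)
      rw [this]
  · rintro ⟨a, b, c, d, h1, h2, h3, hac, hbd⟩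
    obtain ⟨p, hp, hpne, hpe⟩ := mem_del.1 hac
    obtain ⟨q, hq, hqne, hqe⟩ := mem_del.1 hbd
    have hnp := notouch ⟨⟨hb, hcov⟩, hnc⟩ ht hp hpne
    have hnq := notouch ⟨⟨hb, hcov⟩, hnc⟩ ht hq hqne
    have hpb := hb _ hp
    have hqb := hb _ hq
    rw [Prod.ext_iff] at hpe hqe
    simp only at hpe hqe
    have e1 : dd t p.1 = a := hpe.1.symm
    have e2 : dd t p.2 = c := hpe.2.symm
    have e3 : dd t q.1 = b := hqe.1.symm
    have e4 : dd t q.2 = d := hqe.2.symm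
    simp only [dd] at e1 e2 e3 e4
    have : p.1 < q.1 ∧ q.1 < p.2 ∧ p.2 < q.2 := by
      split_ifs at e1 e2 e3 e4 <;> omega
    exact hnc ⟨p.1, q.1, p.2, q.2, this.1, this.2.1, this.2.2,
      by rw [← Prod.mk.eta (p := p)] at hp; exact hp,
      by rw [← Prod.mk.eta (p := q)] at hq; exact hq⟩

end Matching

section Transfer

variable {n t : ℕ} {M : Finset (ℕ × ℕ)}

lemma conn_transfer {S S' : Finset (ℕ × ℕ)} (f : ℕ → ℕ)
    (h : ∀ p ∈ S, ChordConn S' (f p.1) (f p.2)) {a b : ℕ} :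
    ChordConn S a b → ChordConn S' (f a) (f b) := by
  apply conn_map
  intro a b hab
  rcases hab with h1 | h1
  · exact h _ h1
  · exact chordConn_symm (h _ h1)

lemma adj_of_mem {S : Finset (ℕ × ℕ)} {a b : ℕ} (h : (a, b) ∈ S) : ChordConn S a b :=
  Relation.ReflTransGen.single (Or.inl h)

lemma adj_of_mem' {S : Finset (ℕ × ℕ)} {a b : ℕ} (h : (b, a) ∈ S) : ChordConn S a b :=
  Relation.ReflTransGen.single (Or.inr h)

lemma btn_wrap_mem (hn : 1 ≤ n) : (1, 2 * n) ∈ btn n :=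
  Finset.mem_insert_self _ _

lemma btn_pair_mem {a : ℕ} (h2 : Even a) (ha : 2 ≤ a) (hb : a + 1 ≤ 2 * n - 1) :
    (a, a + 1) ∈ btn n := by
  obtain ⟨c, rfl⟩ := h2
  refine mem_btn.2 (Or.inr ⟨c - 1, by omega, ?_⟩)
  rw [Prod.ext_iff]
  constructor <;> simp <;> omega

lemma ee_pair_mem {a : ℕ} (h2 : Odd a) (hb : a + 1 ≤ 2 * n) :
    (a, a + 1) ∈ ee n := by
  obtain ⟨c, rfl⟩ := h2
  refine mem_ee.2 ⟨c, by omega, ?_⟩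
  rw [Prod.ext_iff]
  constructor <;> simp <;> omega

lemma conn_head {S : Finset (ℕ × ℕ)} {a b : ℕ} (h : ChordConn S a b) (hne : a ≠ b) :
    ∃ p ∈ S, p.1 = a ∨ p.2 = a := by
  rcases (Relation.ReflTransGen.cases_head h) with h1 | ⟨c, hc, _⟩
  · exact absurd h1 hne
  · rcases hc with h1 | h1
    · exact ⟨_, h1, Or.inl rfl⟩
    · exact ⟨_, h1, Or.inr rfl⟩

lemma conn_tail {S : Finset (ℕ × ℕ)} {a b : ℕ} (h : ChordConn S a b) (hne : a ≠ b) :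
    ∃ p ∈ S, p.1 = b ∨ p.2 = b :=
  conn_head (chordConn_symm h) (Ne.symm hne)

lemma unionO_bounds (hM : IsNoncrossingMatching n M) (hn : 1 ≤ n) {p : ℕ × ℕ}
    (hp : p ∈ M ∪ btn n) : 1 ≤ p.1 ∧ p.1 < p.2 ∧ p.2 ≤ 2 * n := by
  rcases Finset.mem_union.1 hp with h | h
  · exact hM.1.1 _ h
  · obtain ⟨a, b⟩ := p; exact btn_bounds h hn

lemma unionE_bounds (hM : IsNoncrossingMatching n M) {p : ℕ × ℕ}
    (hp : p ∈ M ∪ ee n) : 1 ≤ p.1 ∧ p.1 < p.2 ∧ p.2 ≤ 2 * n := by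
  rcases Finset.mem_union.1 hp with h | h
  · exact hM.1.1 _ h
  · obtain ⟨a, b⟩ := p; exact ee_bounds h

lemma connO_bounds (hM : IsNoncrossingMatching n M) (hn : 1 ≤ n) {a b : ℕ}
    (h : ChordConn (M ∪ btn n) a b) (hne : a ≠ b) :
    1 ≤ a ∧ a ≤ 2 * n ∧ 1 ≤ b ∧ b ≤ 2 * n := by
  obtain ⟨p, hp, hc⟩ := conn_head h hne
  obtain ⟨q, hq, hc'⟩ := conn_tail h hne
  have h1 := unionO_bounds hM hn hp
  have h2 := unionO_bounds hM hn hq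
  omega

lemma connE_bounds (hM : IsNoncrossingMatching n M) {a b : ℕ}
    (h : ChordConn (M ∪ ee n) a b) (hne : a ≠ b) :
    1 ≤ a ∧ a ≤ 2 * n ∧ 1 ≤ b ∧ b ≤ 2 * n := by
  obtain ⟨p, hp, hc⟩ := conn_head h hne
  obtain ⟨q, hq, hc'⟩ := conn_tail h hne
  have h1 := unionE_bounds hM hp
  have h2 := unionE_bounds hM hq
  omega

/-- When `t` is even, the only chord of `M ∪ btn n` touching `{t, t+1}` is `(t, t+1)`. -/
lemma O_touch_even (hM : IsNoncrossingMatching n M) (ht : (t, t + 1) ∈ M) (hte : Even t)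
    {a b : ℕ} (hp : (a, b) ∈ M ∪ btn n)
    (h : a = t ∨ a = t + 1 ∨ b = t ∨ b = t + 1) : a = t ∧ b = t + 1 := by
  have htb := t_bounds hM ht
  rcases Finset.mem_union.1 hp with hm | hb
  · have := touch hM ht hm (p := (a, b)) h
    rw [Prod.ext_iff] at this; simp at this; omega
  · obtain ⟨c, rfl⟩ := hte
    rcases mem_btn.1 hb with h1 | ⟨i, hi, h1⟩ <;>
      (rw [Prod.ext_iff] at h1; simp at h1; omega)

/-- When `t` is odd, the only chord of `M ∪ ee n` touching `{t, t+1}` is `(t, t+1)`. -/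
lemma E_touch_odd (hM : IsNoncrossingMatching n M) (ht : (t, t + 1) ∈ M) (hto : Odd t)
    {a b : ℕ} (hp : (a, b) ∈ M ∪ ee n)
    (h : a = t ∨ a = t + 1 ∨ b = t ∨ b = t + 1) : a = t ∧ b = t + 1 := by
  have htb := t_bounds hM ht
  rcases Finset.mem_union.1 hp with hm | hb
  · have := touch hM ht hm (p := (a, b)) h
    rw [Prod.ext_iff] at this; simp at this; omega
  · obtain ⟨c, rfl⟩ := hto
    rcases mem_ee.1 hb with ⟨i, hi, h1⟩
    rw [Prod.ext_iff] at h1; simp at h1; omega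

/-- Components of `{t,t+1}` are isolated (even case, O-side). -/
lemma O_comp_even (hM : IsNoncrossingMatching n M) (ht : (t, t + 1) ∈ M) (hte : Even t)
    {a b : ℕ} (h : ChordConn (M ∪ btn n) a b) (ha : a = t ∨ a = t + 1) :
    b = t ∨ b = t + 1 := by
  induction h with
  | refl => exact ha
  | tail hconn hadj ih =>
      rcases hadj with h1 | h1
      · have := O_touch_even hM ht hte h1 (by omega)
        omega
      · have := O_touch_even hM ht hte h1 (by omega)
        omega

/-- Components of `{t,t+1}` are isolated (odd case, E-side). -/
lemma E_comp_odd (hM : IsNoncrossingMatching n M) (ht : (t, t + 1) ∈ M) (hto : Odd t)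
    {a b : ℕ} (h : ChordConn (M ∪ ee n) a b) (ha : a = t ∨ a = t + 1) :
    b = t ∨ b = t + 1 := by
  induction h with
  | refl => exact ha
  | tail hconn hadj ih =>
      rcases hadj with h1 | h1
      · have := E_touch_odd hM ht hto h1 (by omega)
        omega
      · have := E_touch_odd hM ht hto h1 (by omega)
        omega

/-- `t` even: `t` and `t+2` are E-connected. -/
lemma E_step_even (ht : (t, t + 1) ∈ M) (hte : Even t) (h2 : 2 ≤ t) (hub : t + 2 ≤ 2 * n) :
    ChordConn (M ∪ ee n) t (t + 2) := by
  refine (adj_of_mem (Finset.mem_union_left _ ht)).trans (adj_of_mem ?_)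
  have : (t + 1, t + 2) ∈ ee n := ee_pair_mem (by rcases hte with ⟨c, rfl⟩; exact ⟨c, by omega⟩) hub
  exact Finset.mem_union_right _ this

/-- `t` odd, `t + 2 ≤ 2n - 1`: `t` and `t+2` are O-connected. -/
lemma O_step_odd (ht : (t, t + 1) ∈ M) (hto : Odd t) (hub : t + 2 ≤ 2 * n - 1) :
    ChordConn (M ∪ btn n) t (t + 2) := by
  refine (adj_of_mem (Finset.mem_union_left _ ht)).trans (adj_of_mem ?_)
  have : (t + 1, t + 2) ∈ btn n := by
    obtain ⟨c, rfl⟩ := hto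
    exact btn_pair_mem ⟨c + 1, by omega⟩ (by omega) (by omega)
  exact Finset.mem_union_right _ this

/-- `t = 2n - 1`: `2n-1` and `1` are O-connected. -/
lemma O_wrap_odd (ht : (t, t + 1) ∈ M) (htw : t + 1 = 2 * n) (hn : 1 ≤ n) :
    ChordConn (M ∪ btn n) t 1 := by
  refine (adj_of_mem (Finset.mem_union_left _ ht)).trans (adj_of_mem' ?_)
  have : (1, 2 * n) ∈ btn n := btn_wrap_mem hn
  rw [← htw] at this
  exact Finset.mem_union_right _ this

end Transfer

section Transfer2

variable {n t : ℕ} {M : Finset (ℕ × ℕ)}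

lemma mem_btn' (hn : 1 ≤ n) {a b : ℕ} :
    (a, b) ∈ btn n ↔ (a = 1 ∧ b = 2 * n) ∨ (a % 2 = 0 ∧ 2 ≤ a ∧ b = a + 1 ∧ b ≤ 2 * n - 1) := by
  rw [mem_btn]
  constructor
  · rintro (h | ⟨i, hi, h⟩) <;> (rw [Prod.ext_iff] at h; simp at h; omega)
  · rintro (⟨rfl, rfl⟩ | ⟨h1, h2, rfl, h4⟩)
    · exact Or.inl rfl
    · refine Or.inr ⟨(a - 2) / 2, by omega, ?_⟩
      rw [Prod.ext_iff]; simp; omega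

lemma mem_ee' {n a b : ℕ} :
    (a, b) ∈ ee n ↔ a % 2 = 1 ∧ b = a + 1 ∧ b ≤ 2 * n := by
  rw [mem_ee]
  constructor
  · rintro ⟨i, hi, h⟩; rw [Prod.ext_iff] at h; simp at h; omega
  · rintro ⟨h1, rfl, h3⟩
    refine ⟨(a - 1) / 2, by omega, ?_⟩
    rw [Prod.ext_iff]; simp; omega

/-- Redirecting relabeling map. -/
def rdr (t r0 r1 x : ℕ) : ℕ := dd t (if x = t then r0 else if x = t + 1 then r1 else x)

lemma rdr_t {t r0 r1 : ℕ} : rdr t r0 r1 t = dd t r0 := by unfold rdr; rw [if_pos rfl]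

lemma rdr_t1 {t r0 r1 : ℕ} : rdr t r0 r1 (t + 1) = dd t r1 := by
  unfold rdr; rw [if_neg (by omega), if_pos rfl]

lemma rdr_other {t r0 r1 x : ℕ} (h1 : x ≠ t) (h2 : x ≠ t + 1) : rdr t r0 r1 x = dd t x := by
  unfold rdr; rw [if_neg h1, if_neg h2]

lemma lf_dd {t x : ℕ} (h1 : x ≠ t) (h2 : x ≠ t + 1) : lf t (dd t x) = x := by
  unfold lf dd; split_ifs <;> omega

lemma fwd_O_even (hM : IsNoncrossingMatching n M) (ht : (t, t + 1) ∈ M) (hte : t % 2 = 0)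
    (hn : 2 ≤ n) :
    ∀ p ∈ M ∪ btn n, ChordConn (del t M ∪ btn (n - 1)) (rdr t 0 0 p.1) (rdr t 0 0 p.2) := by
  have htb := t_bounds hM ht
  have ht2 : 2 ≤ t := by omega
  have htu : t + 1 ≤ 2 * n - 1 := by omega
  rintro ⟨a, b⟩ hp
  rcases Finset.mem_union.1 hp with hm | hb
  · by_cases he : (a, b) = (t, t + 1)
    · rw [Prod.ext_iff] at he; simp at he
      rw [he.1, he.2, rdr_t, rdr_t1]
      exact Relation.ReflTransGen.refl
    · have hnt := notouch hM ht hm he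
      simp only at hnt
      rw [rdr_other hnt.1 hnt.2.1, rdr_other hnt.2.2.1 hnt.2.2.2]
      exact adj_of_mem (Finset.mem_union_left _ (mem_del.2 ⟨(a, b), hm, he, rfl⟩))
  · rw [mem_btn' (by omega)] at hb
    rcases hb with ⟨rfl, rfl⟩ | ⟨hpar, h2a, rfl, hub⟩
    · rw [rdr_other (by omega) (by omega), rdr_other (by omega) (by omega)]
      have e1 : dd t 1 = 1 := by unfold dd; split_ifs <;> omega
      have e2 : dd t (2 * n) = 2 * (n - 1) := by unfold dd; split_ifs <;> omega
      rw [e1, e2]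
      exact adj_of_mem (Finset.mem_union_right _ ((mem_btn' (by omega)).2 (Or.inl ⟨rfl, rfl⟩)))
    · by_cases hat : a = t
      · subst hat
        rw [rdr_t, rdr_t1]
        exact Relation.ReflTransGen.refl
      · have hx1 : a ≠ t + 1 := by omega
        have hx2 : a + 1 ≠ t := by omega
        have hx3 : a + 1 ≠ t + 1 := by omega
        rw [rdr_other hat hx1, rdr_other hx2 hx3]
        refine adj_of_mem (Finset.mem_union_right _ ?_)
        have hsplit : a + 1 < t ∨ t + 1 < a := by omega
        rcases hsplit with h | h
        · have e1 : dd t a = a := by unfold dd; split_ifs <;> omega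
          have e2 : dd t (a + 1) = a + 1 := by unfold dd; split_ifs <;> omega
          rw [e1, e2]
          exact (mem_btn' (by omega)).2 (Or.inr ⟨hpar, h2a, rfl, by omega⟩)
        · have e1 : dd t a = a - 2 := by unfold dd; split_ifs <;> omega
          have e2 : dd t (a + 1) = a - 1 := by unfold dd; split_ifs <;> omega
          rw [e1, e2]
          exact (mem_btn' (by omega)).2 (Or.inr ⟨by omega, by omega, by omega, by omega⟩)

lemma fwd_E_even (hM : IsNoncrossingMatching n M) (ht : (t, t + 1) ∈ M) (hte : t % 2 = 0)
    (hn : 2 ≤ n) :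
    ∀ p ∈ M ∪ ee n,
      ChordConn (del t M ∪ ee (n - 1)) (rdr t (t - 1) (t + 2) p.1) (rdr t (t - 1) (t + 2) p.2) := by
  have htb := t_bounds hM ht
  have ht2 : 2 ≤ t := by omega
  have htu : t + 2 ≤ 2 * n := by omega
  rintro ⟨a, b⟩ hp
  rcases Finset.mem_union.1 hp with hm | hb
  · by_cases he : (a, b) = (t, t + 1)
    · rw [Prod.ext_iff] at he; simp at he
      rw [he.1, he.2, rdr_t, rdr_t1]
      have e1 : dd t (t - 1) = t - 1 := by unfold dd; split_ifs <;> omega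
      have e2 : dd t (t + 2) = t := by unfold dd; split_ifs <;> omega
      rw [e1, e2]
      refine adj_of_mem (Finset.mem_union_right _ ?_)
      exact mem_ee'.2 ⟨by omega, by omega, by omega⟩
    · have hnt := notouch hM ht hm he
      simp only at hnt
      rw [rdr_other hnt.1 hnt.2.1, rdr_other hnt.2.2.1 hnt.2.2.2]
      exact adj_of_mem (Finset.mem_union_left _ (mem_del.2 ⟨(a, b), hm, he, rfl⟩))
  · rw [mem_ee'] at hb
    obtain ⟨hpar, rfl, hub⟩ := hb
    by_cases hb1 : a = t - 1
    · subst hb1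
      have hr : t - 1 + 1 = t := by omega
      rw [rdr_other (by omega) (by omega), hr, rdr_t]
      have e1 : dd t (t - 1) = t - 1 := by unfold dd; split_ifs <;> omega
      rw [e1]
      exact Relation.ReflTransGen.refl
    · by_cases hb2 : a = t + 1
      · subst hb2
        rw [rdr_t1, rdr_other (by omega) (by omega)]
        have e1 : dd t (t + 2) = t := by unfold dd; split_ifs <;> omega
        rw [e1]
        exact Relation.ReflTransGen.refl
      · have hx1 : a ≠ t := by omega
        have hx2 : a + 1 ≠ t := by omega
        have hx3 : a + 1 ≠ t + 1 := by omega
        rw [rdr_other hx1 hb2, rdr_other hx2 hx3]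
        refine adj_of_mem (Finset.mem_union_right _ ?_)
        have hsplit : a + 1 < t ∨ t + 1 < a := by omega
        rcases hsplit with h | h
        · have e1 : dd t a = a := by unfold dd; split_ifs <;> omega
          have e2 : dd t (a + 1) = a + 1 := by unfold dd; split_ifs <;> omega
          rw [e1, e2]
          exact mem_ee'.2 ⟨hpar, rfl, by omega⟩
        · have e1 : dd t a = a - 2 := by unfold dd; split_ifs <;> omega
          have e2 : dd t (a + 1) = a - 1 := by unfold dd; split_ifs <;> omega
          rw [e1, e2]
          exact mem_ee'.2 ⟨by omega, by omega, by omega⟩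

lemma fwd_E_odd (hM : IsNoncrossingMatching n M) (ht : (t, t + 1) ∈ M) (hto : t % 2 = 1)
    (hn : 2 ≤ n) :
    ∀ p ∈ M ∪ ee n, ChordConn (del t M ∪ ee (n - 1)) (rdr t 0 0 p.1) (rdr t 0 0 p.2) := by
  have htb := t_bounds hM ht
  rintro ⟨a, b⟩ hp
  rcases Finset.mem_union.1 hp with hm | hb
  · by_cases he : (a, b) = (t, t + 1)
    · rw [Prod.ext_iff] at he; simp at he
      rw [he.1, he.2, rdr_t, rdr_t1]
      exact Relation.ReflTransGen.refl
    · have hnt := notouch hM ht hm he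
      simp only at hnt
      rw [rdr_other hnt.1 hnt.2.1, rdr_other hnt.2.2.1 hnt.2.2.2]
      exact adj_of_mem (Finset.mem_union_left _ (mem_del.2 ⟨(a, b), hm, he, rfl⟩))
  · rw [mem_ee'] at hb
    obtain ⟨hpar, rfl, hub⟩ := hb
    by_cases hat : a = t
    · subst hat
      rw [rdr_t, rdr_t1]
      exact Relation.ReflTransGen.refl
    · have hx1 : a ≠ t + 1 := by omega
      have hx2 : a + 1 ≠ t := by omega
      have hx3 : a + 1 ≠ t + 1 := by omega
      rw [rdr_other hat hx1, rdr_other hx2 hx3]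
      refine adj_of_mem (Finset.mem_union_right _ ?_)
      have hsplit : a + 1 < t ∨ t + 1 < a := by omega
      rcases hsplit with h | h
      · have e1 : dd t a = a := by unfold dd; split_ifs <;> omega
        have e2 : dd t (a + 1) = a + 1 := by unfold dd; split_ifs <;> omega
        rw [e1, e2]
        exact mem_ee'.2 ⟨hpar, rfl, by omega⟩
      · have e1 : dd t a = a - 2 := by unfold dd; split_ifs <;> omega
        have e2 : dd t (a + 1) = a - 1 := by unfold dd; split_ifs <;> omega
        rw [e1, e2]
        exact mem_ee'.2 ⟨by omega, by omega, by omega⟩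

lemma fwd_O_odd (hM : IsNoncrossingMatching n M) (ht : (t, t + 1) ∈ M) (hto : t % 2 = 1)
    (hn : 2 ≤ n) :
    ∀ p ∈ M ∪ btn n,
      ChordConn (del t M ∪ btn (n - 1))
        (rdr t (if t = 1 then 2 * n else t - 1) (if t + 1 = 2 * n then 1 else t + 2) p.1)
        (rdr t (if t = 1 then 2 * n else t - 1) (if t + 1 = 2 * n then 1 else t + 2) p.2) := by
  have htb := t_bounds hM ht
  rintro ⟨a, b⟩ hp
  rcases Finset.mem_union.1 hp with hm | hb
  · by_cases he : (a, b) = (t, t + 1)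
    · rw [Prod.ext_iff] at he; simp at he
      rw [he.1, he.2, rdr_t, rdr_t1]
      by_cases h1 : t = 1
      · subst h1
        rw [if_pos rfl, if_neg (by omega)]
        have e1 : dd 1 (2 * n) = 2 * (n - 1) := by unfold dd; split_ifs <;> omega
        have e2 : dd 1 3 = 1 := by unfold dd; split_ifs <;> omega
        rw [e1, e2]
        exact adj_of_mem' (Finset.mem_union_right _ ((mem_btn' (by omega)).2 (Or.inl ⟨rfl, rfl⟩)))
      · by_cases h2 : t + 1 = 2 * n
        · rw [if_neg h1, if_pos h2]
          have e1 : dd t (t - 1) = t - 1 := by unfold dd; split_ifs <;> omega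
          have e2 : dd t 1 = 1 := by unfold dd; split_ifs <;> omega
          rw [e1, e2]
          have : t - 1 = 2 * (n - 1) := by omega
          rw [this]
          exact adj_of_mem'
            (Finset.mem_union_right _ ((mem_btn' (by omega)).2 (Or.inl ⟨rfl, rfl⟩)))
        · rw [if_neg h1, if_neg h2]
          have e1 : dd t (t - 1) = t - 1 := by unfold dd; split_ifs <;> omega
          have e2 : dd t (t + 2) = t := by unfold dd; split_ifs <;> omega
          rw [e1, e2]
          refine adj_of_mem (Finset.mem_union_right _ ?_)
          exact (mem_btn' (by omega)).2 (Or.inr ⟨by omega, by omega, by omega, by omega⟩)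
    · have hnt := notouch hM ht hm he
      simp only at hnt
      rw [rdr_other hnt.1 hnt.2.1, rdr_other hnt.2.2.1 hnt.2.2.2]
      exact adj_of_mem (Finset.mem_union_left _ (mem_del.2 ⟨(a, b), hm, he, rfl⟩))
  · rw [mem_btn' (by omega)] at hb
    rcases hb with ⟨rfl, rfl⟩ | ⟨hpar, h2a, rfl, hub⟩
    · -- the wrap chord (1, 2n)
      by_cases h1 : t = 1
      · subst h1
        rw [rdr_t, rdr_other (by omega) (by omega), if_pos rfl]
        have e1 : dd 1 (2 * n) = 2 * (n - 1) := by unfold dd; split_ifs <;> omega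
        rw [e1]
        exact Relation.ReflTransGen.refl
      · by_cases h2 : t + 1 = 2 * n
        · rw [if_neg h1, if_pos h2, show (2 : ℕ) * n = t + 1 from h2.symm,
            rdr_other (by omega) (by omega), rdr_t1]
          have e1 : dd t 1 = 1 := by unfold dd; split_ifs <;> omega
          rw [e1]
          exact Relation.ReflTransGen.refl
        · rw [rdr_other (by omega) (by omega), rdr_other (by omega) (by omega)]
          have e1 : dd t 1 = 1 := by unfold dd; split_ifs <;> omega
          have e2 : dd t (2 * n) = 2 * (n - 1) := by unfold dd; split_ifs <;> omega
          rw [e1, e2]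
          exact adj_of_mem (Finset.mem_union_right _ ((mem_btn' (by omega)).2 (Or.inl ⟨rfl, rfl⟩)))
    · -- pair chords (a, a+1), a even
      by_cases hb1 : a = t - 1
      · -- chord (t-1, t)
        subst hb1
        have hr : t - 1 + 1 = t := by omega
        rw [rdr_other (by omega) (by omega), hr, rdr_t]
        have e1 : dd t (t - 1) = t - 1 := by unfold dd; split_ifs <;> omega
        rw [e1]
        by_cases h1 : t = 1
        · omega
        · rw [if_neg h1]
          have e2 : dd t (t - 1) = t - 1 := by unfold dd; split_ifs <;> omega
          rw [e2]
          exact Relation.ReflTransGen.refl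
      · by_cases hb2 : a = t + 1
        · -- chord (t+1, t+2)
          subst hb2
          rw [rdr_t1, rdr_other (by omega) (by omega)]
          by_cases h2 : t + 1 = 2 * n
          · omega
          · rw [if_neg h2]
            have e1 : dd t (t + 2) = t := by unfold dd; split_ifs <;> omega
            rw [e1]
            exact Relation.ReflTransGen.refl
        · have hx1 : a ≠ t := by omega
          have hx2 : a + 1 ≠ t := by omega
          have hx3 : a + 1 ≠ t + 1 := by omega
          rw [rdr_other hx1 hb2, rdr_other hx2 hx3]
          refine adj_of_mem (Finset.mem_union_right _ ?_)
          have hsplit : a + 1 < t ∨ t + 1 < a := by omega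
          rcases hsplit with h | h
          · have e1 : dd t a = a := by unfold dd; split_ifs <;> omega
            have e2 : dd t (a + 1) = a + 1 := by unfold dd; split_ifs <;> omega
            rw [e1, e2]
            exact (mem_btn' (by omega)).2 (Or.inr ⟨hpar, h2a, rfl, by omega⟩)
          · have e1 : dd t a = a - 2 := by unfold dd; split_ifs <;> omega
            have e2 : dd t (a + 1) = a - 1 := by unfold dd; split_ifs <;> omega
            rw [e1, e2]
            exact (mem_btn' (by omega)).2 (Or.inr ⟨by omega, by omega, by omega, by omega⟩)

end Transfer2

section Transfer3

variable {n t : ℕ} {M : Finset (ℕ × ℕ)}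

lemma bwd_del (hM : IsNoncrossingMatching n M) (ht : (t, t + 1) ∈ M) {a b : ℕ}
    (hd : (a, b) ∈ del t M) {X : Finset (ℕ × ℕ)} :
    ChordConn (M ∪ X) (lf t a) (lf t b) := by
  obtain ⟨q, hq, hne, heq⟩ := mem_del.1 hd
  have hnt := notouch hM ht hq hne
  rw [Prod.ext_iff] at heq
  simp only at heq
  rw [heq.1, heq.2, lf_dd hnt.1 hnt.2.1, lf_dd hnt.2.2.1 hnt.2.2.2]
  exact adj_of_mem (Finset.mem_union_left _ (by rwa [Prod.mk.eta]))

lemma bwd_O_even (hM : IsNoncrossingMatching n M) (ht : (t, t + 1) ∈ M) (hte : t % 2 = 0)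
    (hn : 2 ≤ n) :
    ∀ p ∈ del t M ∪ btn (n - 1), ChordConn (M ∪ btn n) (lf t p.1) (lf t p.2) := by
  have htb := t_bounds hM ht
  have ht2 : 2 ≤ t := by omega
  rintro ⟨a, b⟩ hp
  rcases Finset.mem_union.1 hp with hd | hb
  · exact bwd_del hM ht hd
  · rw [mem_btn' (by omega)] at hb
    rcases hb with ⟨rfl, rfl⟩ | ⟨hpar, h2a, rfl, hub⟩
    · have e1 : lf t 1 = 1 := by unfold lf; split_ifs <;> omega
      have e2 : lf t (2 * (n - 1)) = 2 * n := by unfold lf; split_ifs <;> omega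
      rw [e1, e2]
      exact adj_of_mem (Finset.mem_union_right _ (btn_wrap_mem (by omega)))
    · rcases (show a + 1 < t ∨ t ≤ a by omega) with h | h
      · have e1 : lf t a = a := by unfold lf; split_ifs <;> omega
        have e2 : lf t (a + 1) = a + 1 := by unfold lf; split_ifs <;> omega
        rw [e1, e2]
        exact adj_of_mem (Finset.mem_union_right _
          ((mem_btn' (by omega)).2 (Or.inr ⟨hpar, h2a, rfl, by omega⟩)))
      · have e1 : lf t a = a + 2 := by unfold lf; split_ifs <;> omega
        have e2 : lf t (a + 1) = a + 3 := by unfold lf; split_ifs <;> omega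
        rw [e1, e2]
        exact adj_of_mem (Finset.mem_union_right _
          ((mem_btn' (by omega)).2 (Or.inr ⟨by omega, by omega, by omega, by omega⟩)))

lemma bwd_E_even (hM : IsNoncrossingMatching n M) (ht : (t, t + 1) ∈ M) (hte : t % 2 = 0)
    (hn : 2 ≤ n) :
    ∀ p ∈ del t M ∪ ee (n - 1), ChordConn (M ∪ ee n) (lf t p.1) (lf t p.2) := by
  have htb := t_bounds hM ht
  have ht2 : 2 ≤ t := by omega
  rintro ⟨a, b⟩ hp
  rcases Finset.mem_union.1 hp with hd | hb
  · exact bwd_del hM ht hd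
  · rw [mem_ee'] at hb
    obtain ⟨hpar, rfl, hub⟩ := hb
    rcases (show a + 1 < t ∨ t = a + 1 ∨ t ≤ a by omega) with h | h | h
    · have e1 : lf t a = a := by unfold lf; split_ifs <;> omega
      have e2 : lf t (a + 1) = a + 1 := by unfold lf; split_ifs <;> omega
      rw [e1, e2]
      exact adj_of_mem (Finset.mem_union_right _ (mem_ee'.2 ⟨hpar, rfl, by omega⟩))
    · have e1 : lf t a = a := by unfold lf; split_ifs <;> omega
      have e2 : lf t (a + 1) = t + 2 := by unfold lf; split_ifs <;> omega
      rw [e1, e2]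
      have c1 : ChordConn (M ∪ ee n) a t := by
        rw [show t = a + 1 from h]
        exact adj_of_mem (Finset.mem_union_right _ (mem_ee'.2 ⟨hpar, rfl, by omega⟩))
      refine c1.trans ((adj_of_mem (Finset.mem_union_left _ ht)).trans (adj_of_mem ?_))
      exact Finset.mem_union_right _ (mem_ee'.2 ⟨by omega, rfl, by omega⟩)
    · have e1 : lf t a = a + 2 := by unfold lf; split_ifs <;> omega
      have e2 : lf t (a + 1) = a + 3 := by unfold lf; split_ifs <;> omega
      rw [e1, e2]
      exact adj_of_mem (Finset.mem_union_right _ (mem_ee'.2 ⟨by omega, by omega, by omega⟩))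

lemma bwd_E_odd (hM : IsNoncrossingMatching n M) (ht : (t, t + 1) ∈ M) (hto : t % 2 = 1)
    (hn : 2 ≤ n) :
    ∀ p ∈ del t M ∪ ee (n - 1), ChordConn (M ∪ ee n) (lf t p.1) (lf t p.2) := by
  have htb := t_bounds hM ht
  rintro ⟨a, b⟩ hp
  rcases Finset.mem_union.1 hp with hd | hb
  · exact bwd_del hM ht hd
  · rw [mem_ee'] at hb
    obtain ⟨hpar, rfl, hub⟩ := hb
    rcases (show a + 1 < t ∨ t ≤ a by omega) with h | h
    · have e1 : lf t a = a := by unfold lf; split_ifs <;> omega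
      have e2 : lf t (a + 1) = a + 1 := by unfold lf; split_ifs <;> omega
      rw [e1, e2]
      exact adj_of_mem (Finset.mem_union_right _ (mem_ee'.2 ⟨hpar, rfl, by omega⟩))
    · have e1 : lf t a = a + 2 := by unfold lf; split_ifs <;> omega
      have e2 : lf t (a + 1) = a + 3 := by unfold lf; split_ifs <;> omega
      rw [e1, e2]
      exact adj_of_mem (Finset.mem_union_right _ (mem_ee'.2 ⟨by omega, by omega, by omega⟩))

lemma bwd_O_odd (hM : IsNoncrossingMatching n M) (ht : (t, t + 1) ∈ M) (hto : t % 2 = 1)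
    (hn : 2 ≤ n) :
    ∀ p ∈ del t M ∪ btn (n - 1), ChordConn (M ∪ btn n) (lf t p.1) (lf t p.2) := by
  have htb := t_bounds hM ht
  rintro ⟨a, b⟩ hp
  rcases Finset.mem_union.1 hp with hd | hb
  · exact bwd_del hM ht hd
  · rw [mem_btn' (by omega)] at hb
    rcases hb with ⟨rfl, rfl⟩ | ⟨hpar, h2a, rfl, hub⟩
    · by_cases h1 : t = 1
      · subst h1
        have e1 : lf 1 1 = 3 := by unfold lf; split_ifs <;> omega
        have e2 : lf 1 (2 * (n - 1)) = 2 * n := by unfold lf; split_ifs <;> omega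
        rw [e1, e2]
        have c1 : ChordConn (M ∪ btn n) 3 2 :=
          adj_of_mem' (Finset.mem_union_right _
            ((mem_btn' (by omega)).2 (Or.inr ⟨by omega, by omega, by omega, by omega⟩)))
        refine c1.trans ((adj_of_mem' (Finset.mem_union_left _ ht)).trans (adj_of_mem ?_))
        exact Finset.mem_union_right _ (btn_wrap_mem (by omega))
      · by_cases h2 : t + 1 = 2 * n
        · have e1 : lf t 1 = 1 := by unfold lf; split_ifs <;> omega
          have e2 : lf t (2 * (n - 1)) = 2 * (n - 1) := by unfold lf; split_ifs <;> omega
          rw [e1, e2]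
          have c1 : ChordConn (M ∪ btn n) 1 (t + 1) := by
            rw [h2]
            exact adj_of_mem (Finset.mem_union_right _ (btn_wrap_mem (by omega)))
          refine c1.trans ((adj_of_mem' (Finset.mem_union_left _ ht)).trans (adj_of_mem' ?_))
          exact Finset.mem_union_right _
            ((mem_btn' (by omega)).2 (Or.inr ⟨by omega, by omega, by omega, by omega⟩))
        · have e1 : lf t 1 = 1 := by unfold lf; split_ifs <;> omega
          have e2 : lf t (2 * (n - 1)) = 2 * n := by unfold lf; split_ifs <;> omega
          rw [e1, e2]
          exact adj_of_mem (Finset.mem_union_right _ (btn_wrap_mem (by omega)))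
    · rcases (show a + 1 < t ∨ t = a + 1 ∨ t ≤ a by omega) with h | h | h
      · have e1 : lf t a = a := by unfold lf; split_ifs <;> omega
        have e2 : lf t (a + 1) = a + 1 := by unfold lf; split_ifs <;> omega
        rw [e1, e2]
        exact adj_of_mem (Finset.mem_union_right _
          ((mem_btn' (by omega)).2 (Or.inr ⟨hpar, h2a, rfl, by omega⟩)))
      · have e1 : lf t a = a := by unfold lf; split_ifs <;> omega
        have e2 : lf t (a + 1) = t + 2 := by unfold lf; split_ifs <;> omega
        rw [e1, e2]
        have c1 : ChordConn (M ∪ btn n) a t := by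
          rw [show t = a + 1 from h]
          exact adj_of_mem (Finset.mem_union_right _
            ((mem_btn' (by omega)).2 (Or.inr ⟨hpar, h2a, rfl, by omega⟩)))
        refine c1.trans ((adj_of_mem (Finset.mem_union_left _ ht)).trans (adj_of_mem ?_))
        exact Finset.mem_union_right _
          ((mem_btn' (by omega)).2 (Or.inr ⟨by omega, by omega, by omega, by omega⟩))
      · have e1 : lf t a = a + 2 := by unfold lf; split_ifs <;> omega
        have e2 : lf t (a + 1) = a + 3 := by unfold lf; split_ifs <;> omega
        rw [e1, e2]
        exact adj_of_mem (Finset.mem_union_right _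
          ((mem_btn' (by omega)).2 (Or.inr ⟨by omega, by omega, by omega, by omega⟩)))

end Transfer3

section Main

lemma dd_par {t a : ℕ} : dd t a % 2 = a % 2 := by unfold dd; split_ifs <;> omega

lemma ddlt {t a b : ℕ} (a1 : a ≠ t) (a2 : a ≠ t + 1) (b1 : b ≠ t) (b2 : b ≠ t + 1)
    (h : a < b) : dd t a < dd t b := by unfold dd; split_ifs <;> omega

theorem LA (N : ℕ) : ∀ M, IsNoncrossingMatching N M →
    ∀ x y u v, x % 2 = 1 → y % 2 = 1 → u % 2 = 0 → v % 2 = 0 →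
    ChordConn (M ∪ btn N) x y → ChordConn (M ∪ ee N) u v →
    ((x < u ∧ u < y ∧ y < v) ∨ (u < x ∧ x < v ∧ v < y)) → False := by
  induction N using Nat.strong_induction_on with
  | _ n IH =>
  intro M hM x y u v hx hy hu hv hO hE hC
  have hxy : x ≠ y := by omega
  have huv : u ≠ v := by omega
  have hbE := connE_bounds hM hE huv
  have hn2 : 2 ≤ n := by omega
  have hbO := connO_bounds hM (by omega) hO hxy
  obtain ⟨t, ht⟩ := exists_innermost hM (by omega)
  have htb := t_bounds hM ht
  have hMd := del_isNCM hM ht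
  rcases Nat.mod_two_eq_zero_or_one t with hte | hto
  · -- t even
    have hteE : Even t := Nat.even_iff.2 hte
    have key : ∀ x' y' u' v', x' ≠ t → x' ≠ t + 1 → y' ≠ t → y' ≠ t + 1 →
        u' ≠ t → u' ≠ t + 1 → v' ≠ t → v' ≠ t + 1 →
        x' % 2 = 1 → y' % 2 = 1 → u' % 2 = 0 → v' % 2 = 0 →
        ChordConn (M ∪ btn n) x' y' → ChordConn (M ∪ ee n) u' v' →
        ((x' < u' ∧ u' < y' ∧ y' < v') ∨ (u' < x' ∧ x' < v' ∧ v' < y')) → False := by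
      intro x' y' u' v' a1 a2 a3 a4 a5 a6 a7 a8 p1 p2 p3 p4 c1 c2 cc
      have d1 := conn_transfer _ (fwd_O_even hM ht hte hn2) c1
      rw [rdr_other a1 a2, rdr_other a3 a4] at d1
      have d2 := conn_transfer _ (fwd_E_even hM ht hte hn2) c2
      rw [rdr_other a5 a6, rdr_other a7 a8] at d2
      refine IH (n - 1) (by omega) (del t M) hMd _ _ _ _ ?_ ?_ ?_ ?_ d1 d2 ?_
      · have := dd_par (t := t) (a := x'); omega
      · have := dd_par (t := t) (a := y'); omega
      · have := dd_par (t := t) (a := u'); omega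
      · have := dd_par (t := t) (a := v'); omega
      · rcases cc with ⟨e1, e2, e3⟩ | ⟨e1, e2, e3⟩
        · exact Or.inl ⟨ddlt a1 a2 a5 a6 e1, ddlt a5 a6 a3 a4 e2, ddlt a3 a4 a7 a8 e3⟩
        · exact Or.inr ⟨ddlt a5 a6 a1 a2 e1, ddlt a1 a2 a7 a8 e2, ddlt a7 a8 a3 a4 e3⟩
    have hx2 : x ≠ t + 1 := by
      intro h
      have := O_comp_even hM ht hteE hO (Or.inr h)
      omega
    have hy2 : y ≠ t + 1 := by
      intro h
      have := O_comp_even hM ht hteE (chordConn_symm hO) (Or.inr h)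
      omega
    have hstep : ChordConn (M ∪ ee n) t (t + 2) :=
      E_step_even ht hteE (by omega) (by omega)
    by_cases hut : u = t
    · subst hut
      have hE2 : ChordConn (M ∪ ee n) (u + 2) v := (chordConn_symm hstep).trans hE
      exact key x y (u + 2) v (by omega) hx2 (by omega) hy2 (by omega) (by omega)
        (by omega) (by omega) hx hy (by omega) hv hO hE2 (by omega)
    · by_cases hvt : v = t
      · subst hvt
        have hE2 : ChordConn (M ∪ ee n) u (v + 2) := hE.trans hstep
        exact key x y u (v + 2) (by omega) hx2 (by omega) hy2 hut (by omega) (by omega)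
          (by omega) hx hy hu (by omega) hO hE2 (by omega)
      · exact key x y u v (by omega) hx2 (by omega) hy2 hut (by omega) hvt (by omega)
          hx hy hu hv hO hE hC
  · -- t odd
    have htoO : Odd t := Nat.odd_iff.2 hto
    have key : ∀ x' y' u' v', x' ≠ t → x' ≠ t + 1 → y' ≠ t → y' ≠ t + 1 →
        u' ≠ t → u' ≠ t + 1 → v' ≠ t → v' ≠ t + 1 →
        x' % 2 = 1 → y' % 2 = 1 → u' % 2 = 0 → v' % 2 = 0 →
        ChordConn (M ∪ btn n) x' y' → ChordConn (M ∪ ee n) u' v' →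
        ((x' < u' ∧ u' < y' ∧ y' < v') ∨ (u' < x' ∧ x' < v' ∧ v' < y')) → False := by
      intro x' y' u' v' a1 a2 a3 a4 a5 a6 a7 a8 p1 p2 p3 p4 c1 c2 cc
      have d1 := conn_transfer _ (fwd_O_odd hM ht hto hn2) c1
      rw [rdr_other a1 a2, rdr_other a3 a4] at d1
      have d2 := conn_transfer _ (fwd_E_odd hM ht hto hn2) c2
      rw [rdr_other a5 a6, rdr_other a7 a8] at d2
      refine IH (n - 1) (by omega) (del t M) hMd _ _ _ _ ?_ ?_ ?_ ?_ d1 d2 ?_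
      · have := dd_par (t := t) (a := x'); omega
      · have := dd_par (t := t) (a := y'); omega
      · have := dd_par (t := t) (a := u'); omega
      · have := dd_par (t := t) (a := v'); omega
      · rcases cc with ⟨e1, e2, e3⟩ | ⟨e1, e2, e3⟩
        · exact Or.inl ⟨ddlt a1 a2 a5 a6 e1, ddlt a5 a6 a3 a4 e2, ddlt a3 a4 a7 a8 e3⟩
        · exact Or.inr ⟨ddlt a5 a6 a1 a2 e1, ddlt a1 a2 a7 a8 e2, ddlt a7 a8 a3 a4 e3⟩
    have hu3 : u ≠ t + 1 := by
      intro h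
      have := E_comp_odd hM ht htoO hE (Or.inr h)
      omega
    have hv3 : v ≠ t + 1 := by
      intro h
      have := E_comp_odd hM ht htoO (chordConn_symm hE) (Or.inr h)
      omega
    by_cases hxt : x = t
    · subst hxt
      have hnw : x + 1 ≠ 2 * n := by omega
      have hstep : ChordConn (M ∪ btn n) x (x + 2) := O_step_odd ht htoO (by omega)
      have hO2 : ChordConn (M ∪ btn n) (x + 2) y := (chordConn_symm hstep).trans hO
      exact key (x + 2) y u v (by omega) (by omega) (by omega) (by omega) (by omega) hu3
        (by omega) hv3 (by omega) hy hu hv hO2 hE (by omega)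
    · by_cases hyt : y = t
      · subst hyt
        by_cases hw : y + 1 = 2 * n
        · have hO2 : ChordConn (M ∪ btn n) 1 x :=
            chordConn_symm (hO.trans (O_wrap_odd ht hw (by omega)))
          exact key 1 x u v (by omega) (by omega) hxt (by omega) (by omega) hu3
            (by omega) hv3 (by omega) hx hu hv hO2 hE (by omega)
        · have hstep : ChordConn (M ∪ btn n) y (y + 2) := O_step_odd ht htoO (by omega)
          have hO2 : ChordConn (M ∪ btn n) x (y + 2) := hO.trans hstep
          exact key x (y + 2) u v hxt (by omega) (by omega) (by omega) (by omega) hu3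
            (by omega) hv3 hx (by omega) hu hv hO2 hE (by omega)
      · exact key x y u v hxt (by omega) hyt (by omega) (by omega) hu3 (by omega) hv3
          hx hy hu hv hO hE hC

end Main

section MainB

lemma lflt {t a b : ℕ} (h : a < b) : lf t a < lf t b := by unfold lf; split_ifs <;> omega

lemma lf_par {t a : ℕ} : lf t a % 2 = a % 2 := by unfold lf; split_ifs <;> omega

theorem LB (N : ℕ) : ∀ M, IsNoncrossingMatching N M →
    ∀ u v, u % 2 = 0 → v % 2 = 0 → 1 ≤ u → u < v → v ≤ 2 * N →
    ¬ ChordConn (M ∪ ee N) u v →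
    ∃ x y, x % 2 = 1 ∧ y % 2 = 1 ∧ y ≤ 2 * N ∧ ChordConn (M ∪ btn N) x y ∧
      ((x < u ∧ u < y ∧ y < v) ∨ (u < x ∧ x < v ∧ v < y)) := by
  induction N using Nat.strong_induction_on with
  | _ n IH =>
  intro M hM u v hu hv hu1 huv hv2 hnE
  have hn2 : 2 ≤ n := by omega
  obtain ⟨t, ht⟩ := exists_innermost hM (by omega)
  have htb := t_bounds hM ht
  have hMd := del_isNCM hM ht
  rcases Nat.mod_two_eq_zero_or_one t with hte | hto
  · -- t even : E-side is merged, O-side clean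
    have hteE : Even t := Nat.even_iff.2 hte
    have hstep : ChordConn (M ∪ ee n) t (t + 2) :=
      E_step_even ht hteE (by omega) (by omega)
    have key : ∀ u' v', u' ≠ t → u' ≠ t + 1 → v' ≠ t → v' ≠ t + 1 →
        u' % 2 = 0 → v' % 2 = 0 → 1 ≤ u' → u' < v' → v' ≤ 2 * n →
        ¬ ChordConn (M ∪ ee n) u' v' →
        ∃ x y, x % 2 = 1 ∧ y % 2 = 1 ∧ y ≤ 2 * n ∧ ChordConn (M ∪ btn n) x y ∧
          ((x < u' ∧ u' < y ∧ y < v') ∨ (u' < x ∧ x < v' ∧ v' < y)) := by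
      intro u' v' a5 a6 a7 a8 p3 p4 b1 b2 b3 hne
      have hne' : ¬ ChordConn (del t M ∪ ee (n - 1)) (dd t u') (dd t v') := by
        intro h
        have := conn_transfer _ (bwd_E_even hM ht hte hn2) h
        rw [lf_dd a5 a6, lf_dd a7 a8] at this
        exact hne this
      obtain ⟨x', y', q1, q2, q3, q4, q5⟩ :=
        IH (n - 1) (by omega) (del t M) hMd (dd t u') (dd t v')
          (by have := dd_par (t := t) (a := u'); omega)
          (by have := dd_par (t := t) (a := v'); omega)
          (by unfold dd; split_ifs <;> omega)
          (ddlt a5 a6 a7 a8 b2)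
          (by unfold dd; split_ifs <;> omega) hne'
      have e1 : lf t (dd t u') = u' := lf_dd a5 a6
      have e2 : lf t (dd t v') = v' := lf_dd a7 a8
      refine ⟨lf t x', lf t y', by have := lf_par (t := t) (a := x'); omega,
        by have := lf_par (t := t) (a := y'); omega,
        by unfold lf; split_ifs <;> omega,
        conn_transfer _ (bwd_O_even hM ht hte hn2) q4, ?_⟩
      rcases q5 with ⟨f1, f2, f3⟩ | ⟨f1, f2, f3⟩
      · have g1 := lflt (t := t) f1
        have g2 := lflt (t := t) f2
        have g3 := lflt (t := t) f3
        rw [e1] at g1 g2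
        rw [e2] at g3
        exact Or.inl ⟨g1, g2, g3⟩
      · have g1 := lflt (t := t) f1
        have g2 := lflt (t := t) f2
        have g3 := lflt (t := t) f3
        rw [e1] at g1
        rw [e2] at g2 g3
        exact Or.inr ⟨g1, g2, g3⟩
    by_cases hut : u = t
    · subst hut
      have hvv : v ≠ u + 2 := by
        intro h; rw [h] at hnE; exact hnE hstep
      have hnE2 : ¬ ChordConn (M ∪ ee n) (u + 2) v := by
        intro h; exact hnE (hstep.trans h)
      obtain ⟨x, y, q1, q2, q3, q4, q5⟩ := key (u + 2) v (by omega) (by omega)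
        (by omega) (by omega) (by omega) hv (by omega) (by omega) hv2 hnE2
      refine ⟨x, y, q1, q2, q3, q4, ?_⟩
      have hx2 : x ≠ u + 1 := by
        intro h
        have := O_comp_even hM ht hteE q4 (Or.inr h)
        omega
      have hy2 : y ≠ u + 1 := by
        intro h
        have := O_comp_even hM ht hteE (chordConn_symm q4) (Or.inr h)
        omega
      omega
    · by_cases hvt : v = t
      · subst hvt
        have hnE2 : ¬ ChordConn (M ∪ ee n) u (v + 2) := by
          intro h; exact hnE (h.trans (chordConn_symm hstep))
        obtain ⟨x, y, q1, q2, q3, q4, q5⟩ := key u (v + 2) hut (by omega)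
          (by omega) (by omega) hu (by omega) hu1 (by omega) (by omega) hnE2
        refine ⟨x, y, q1, q2, q3, q4, ?_⟩
        have hx2 : x ≠ v + 1 := by
          intro h
          have := O_comp_even hM ht hteE q4 (Or.inr h)
          omega
        have hy2 : y ≠ v + 1 := by
          intro h
          have := O_comp_even hM ht hteE (chordConn_symm q4) (Or.inr h)
          omega
        omega
      · exact key u v hut (by omega) hvt (by omega) hu hv hu1 huv hv2 hnE
  · -- t odd : E-side clean, O-side merged
    have htoO : Odd t := Nat.odd_iff.2 hto
    by_cases hv3 : v = t + 1
    · subst hv3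
      by_cases hw : t + 1 = 2 * n
      · refine ⟨1, t, by omega, hto, by omega, chordConn_symm (O_wrap_odd ht hw (by omega)), ?_⟩
        omega
      · refine ⟨t, t + 2, hto, by omega, by omega, O_step_odd ht htoO (by omega), ?_⟩
        omega
    · by_cases hu3 : u = t + 1
      · subst hu3
        refine ⟨t, t + 2, hto, by omega, by omega, O_step_odd ht htoO (by omega), ?_⟩
        omega
      · have key : True := trivial
        have hne' : ¬ ChordConn (del t M ∪ ee (n - 1)) (dd t u) (dd t v) := by
          intro h
          have := conn_transfer _ (bwd_E_odd hM ht hto hn2) h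
          rw [lf_dd (by omega) hu3, lf_dd (by omega) hv3] at this
          exact hnE this
        obtain ⟨x', y', q1, q2, q3, q4, q5⟩ :=
          IH (n - 1) (by omega) (del t M) hMd (dd t u) (dd t v)
            (by have := dd_par (t := t) (a := u); omega)
            (by have := dd_par (t := t) (a := v); omega)
            (by unfold dd; split_ifs <;> omega)
            (ddlt (by omega) hu3 (by omega) hv3 huv)
            (by unfold dd; split_ifs <;> omega) hne'
        have e1 : lf t (dd t u) = u := lf_dd (by omega) hu3
        have e2 : lf t (dd t v) = v := lf_dd (by omega) hv3
        refine ⟨lf t x', lf t y', by have := lf_par (t := t) (a := x'); omega,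
          by have := lf_par (t := t) (a := y'); omega,
          by unfold lf; split_ifs <;> omega,
          conn_transfer _ (bwd_O_odd hM ht hto hn2) q4, ?_⟩
        rcases q5 with ⟨f1, f2, f3⟩ | ⟨f1, f2, f3⟩
        · have g1 := lflt (t := t) f1
          have g2 := lflt (t := t) f2
          have g3 := lflt (t := t) f3
          rw [e1] at g1 g2
          rw [e2] at g3
          exact Or.inl ⟨g1, g2, g3⟩
        · have g1 := lflt (t := t) f1
          have g2 := lflt (t := t) f2
          have g3 := lflt (t := t) f3
          rw [e1] at g1
          rw [e2] at g2 g3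
          exact Or.inr ⟨g1, g2, g3⟩

end MainB

section Tree

lemma node_edges (ts : List PlaneTree) :
    (PlaneTree.node ts).edges = (ts.map fun t => t.edges + 1).sum := by
  rw [PlaneTree.edges]
  congr 1
  exact List.attach_map_val (l := ts) (f := fun t => t.edges + 1)

lemma node_edges_cons (cs : List PlaneTree) (ts : List PlaneTree) :
    (PlaneTree.node (PlaneTree.node cs :: ts)).edges =
      (PlaneTree.node cs).edges + 1 + (PlaneTree.node ts).edges := by
  rw [node_edges (PlaneTree.node cs :: ts), node_edges ts, List.map_cons, List.sum_cons]

lemma matchList_bounds' :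
    ∀ (i : ℕ) (ts : List PlaneTree), ∀ p ∈ matchList i ts,
      i ≤ p.1 ∧ p.1 < p.2 ∧ p.2 + 1 ≤ i + 2 * (PlaneTree.node ts).edges := by
  intro i ts
  induction i, ts using matchList.induct with
  | case1 i => intro p hp; simp [matchList] at hp
  | case2 i cs ts ih1 ih2 =>
    intro p hp
    rw [matchList] at hp
    have hE := node_edges_cons cs ts
    rcases Finset.mem_insert.1 hp with rfl | hp
    · simp only
      omega
    rcases Finset.mem_union.1 hp with h | h
    · have := ih1 p h; omega
    · have := ih2 p h; omega

lemma matchList_cover' :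
    ∀ (i : ℕ) (ts : List PlaneTree), ∀ k, i ≤ k → k + 1 ≤ i + 2 * (PlaneTree.node ts).edges →
      ∃! p : ℕ × ℕ, p ∈ matchList i ts ∧ (p.1 = k ∨ p.2 = k) := by
  intro i ts
  induction i, ts using matchList.induct with
  | case1 i =>
    intro k h1 h2
    rw [node_edges] at h2
    simp at h2
    omega
  | case2 i cs ts ih1 ih2 =>
    intro k h1 h2
    have hE := node_edges_cons cs ts
    have hbA := matchList_bounds' (i + 1) cs
    have hbB := matchList_bounds' (i + 2 * (PlaneTree.node cs).edges + 2) ts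
    rw [matchList]
    set e0 := (PlaneTree.node cs).edges with he0
    by_cases hk1 : k = i
    · refine ⟨(i, i + 2 * e0 + 1), ⟨Finset.mem_insert_self _ _, Or.inl hk1.symm⟩, ?_⟩
      rintro q ⟨hq, hqc⟩
      rcases Finset.mem_insert.1 hq with rfl | hq
      · rfl
      exfalso
      rcases Finset.mem_union.1 hq with h | h
      · have := hbA q h; omega
      · have := hbB q h; omega
    · by_cases hk2 : k = i + 2 * e0 + 1
      · refine ⟨(i, i + 2 * e0 + 1), ⟨Finset.mem_insert_self _ _, Or.inr hk2.symm⟩, ?_⟩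
        rintro q ⟨hq, hqc⟩
        rcases Finset.mem_insert.1 hq with rfl | hq
        · rfl
        exfalso
        rcases Finset.mem_union.1 hq with h | h
        · have := hbA q h; omega
        · have := hbB q h; omega
      · by_cases hk3 : k < i + 2 * e0 + 1
        · obtain ⟨p, ⟨hp, hpc⟩, huniq⟩ := ih1 k (by omega) (by omega)
          refine ⟨p, ⟨Finset.mem_insert_of_mem (Finset.mem_union_left _ hp), hpc⟩, ?_⟩
          rintro q ⟨hq, hqc⟩
          rcases Finset.mem_insert.1 hq with rfl | hq
          · simp only at hqc; omega
          rcases Finset.mem_union.1 hq with h | h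
          · exact huniq q ⟨h, hqc⟩
          · have := hbB q h; omega
        · obtain ⟨p, ⟨hp, hpc⟩, huniq⟩ := ih2 k (by omega) (by omega)
          refine ⟨p, ⟨Finset.mem_insert_of_mem (Finset.mem_union_right _ hp), hpc⟩, ?_⟩
          rintro q ⟨hq, hqc⟩
          rcases Finset.mem_insert.1 hq with rfl | hq
          · simp only at hqc; omega
          rcases Finset.mem_union.1 hq with h | h
          · have := hbA q h; omega
          · exact huniq q ⟨h, hqc⟩

lemma matchList_nc' :
    ∀ (i : ℕ) (ts : List PlaneTree),
      ¬ ∃ a b c d : ℕ, a < b ∧ b < c ∧ c < d ∧ (a, c) ∈ matchList i ts ∧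
        (b, d) ∈ matchList i ts := by
  intro i ts
  induction i, ts using matchList.induct with
  | case1 i => rintro ⟨a, b, c, d, h1, h2, h3, hac, hbd⟩; simp [matchList] at hac
  | case2 i cs ts ih1 ih2 =>
    rintro ⟨a, b, c, d, h1, h2, h3, hac, hbd⟩
    have hbA := matchList_bounds' (i + 1) cs
    have hbB := matchList_bounds' (i + 2 * (PlaneTree.node cs).edges + 2) ts
    rw [matchList] at hac hbd
    rcases Finset.mem_insert.1 hac with hac0 | hac'
    · rw [Prod.ext_iff] at hac0; simp at hac0
      rcases Finset.mem_insert.1 hbd with hbd0 | hbd'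
      · rw [Prod.ext_iff] at hbd0; simp at hbd0; omega
      rcases Finset.mem_union.1 hbd' with h | h
      · have := hbA _ h; simp only at this; omega
      · have := hbB _ h; simp only at this; omega
    · rcases Finset.mem_insert.1 hbd with hbd0 | hbd'
      · rw [Prod.ext_iff] at hbd0; simp at hbd0
        rcases Finset.mem_union.1 hac' with h | h
        · have := hbA _ h; simp only at this; omega
        · have := hbB _ h; simp only at this; omega
      · rcases Finset.mem_union.1 hac' with h | h <;> rcases Finset.mem_union.1 hbd' with h' | h'
        · exact ih1 ⟨a, b, c, d, h1, h2, h3, h, h'⟩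
        · have := hbA _ h; have := hbB _ h'; simp only at *; omega
        · have := hbB _ h; have := hbA _ h'; simp only at *; omega
        · exact ih2 ⟨a, b, c, d, h1, h2, h3, h, h'⟩

lemma toMatching_isNCM (T : PlaneTree) : IsNoncrossingMatching T.edges T.toMatching := by
  obtain ⟨ts⟩ := T
  show IsNoncrossingMatching (PlaneTree.node ts).edges (matchList 1 ts)
  refine ⟨⟨?_, ?_⟩, matchList_nc' 1 ts⟩
  · intro p hp
    have := matchList_bounds' 1 ts p hp
    omega
  · intro k hk1 hk2
    exact matchList_cover' 1 ts k hk1 (by omega)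

end Tree

section Phi

variable {n : ℕ} {M : Finset (ℕ × ℕ)}

/-- Cyclic successor on `{1,…,2n}`. -/
def up (n x : ℕ) : ℕ := if x = 2 * n then 1 else x + 1

/-- Cyclic predecessor on `{1,…,2n}`. -/
def down (n x : ℕ) : ℕ := if x = 1 then 2 * n else x - 1

lemma phi_fwd (hM : IsNoncrossingMatching n M) (hn : 1 ≤ n) :
    ∀ p ∈ phi n M ∪ btn n, ChordConn (M ∪ ee n) (up n p.1) (up n p.2) := by
  rintro ⟨a, b⟩ hp
  rcases Finset.mem_union.1 hp with hm | hb
  · rcases Finset.mem_union.1 hm with h | h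
    · obtain ⟨q, hq, heq⟩ := Finset.mem_image.1 h
      rw [Finset.mem_filter] at hq
      have hqb := hM.1.1 _ hq.1
      rw [Prod.ext_iff] at heq
      simp only at heq
      rw [← heq.1, ← heq.2]
      have e1 : up n (q.2 - 1) = q.2 := by unfold up; split_ifs <;> omega
      have e2 : up n (2 * n) = 1 := by unfold up; split_ifs <;> omega
      rw [e1, e2]
      refine adj_of_mem' (Finset.mem_union_left _ ?_)
      have : q = (1, q.2) := by rw [Prod.ext_iff]; exact ⟨hq.2, rfl⟩
      rw [← this]; exact hq.1
    · obtain ⟨q, hq, heq⟩ := Finset.mem_image.1 h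
      rw [Finset.mem_filter] at hq
      have hqb := hM.1.1 _ hq.1
      rw [Prod.ext_iff] at heq
      simp only at heq
      rw [← heq.1, ← heq.2]
      have hq1 : 2 ≤ q.1 := by
        rcases Nat.lt_or_ge q.1 2 with h' | h'
        · exfalso; exact hq.2 (by omega)
        · exact h'
      have e1 : up n (q.1 - 1) = q.1 := by unfold up; split_ifs <;> omega
      have e2 : up n (q.2 - 1) = q.2 := by unfold up; split_ifs <;> omega
      rw [e1, e2]
      exact adj_of_mem (Finset.mem_union_left _ (by rw [Prod.mk.eta]; exact hq.1))
  · rw [mem_btn' hn] at hb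
    rcases hb with ⟨rfl, rfl⟩ | ⟨hpar, h2a, rfl, hub⟩
    · have e1 : up n 1 = 2 := by unfold up; split_ifs <;> omega
      have e2 : up n (2 * n) = 1 := by unfold up; split_ifs <;> omega
      rw [e1, e2]
      exact adj_of_mem' (Finset.mem_union_right _ (mem_ee'.2 ⟨by omega, by omega, by omega⟩))
    · have e1 : up n a = a + 1 := by unfold up; split_ifs <;> omega
      have e2 : up n (a + 1) = a + 2 := by unfold up; split_ifs <;> omega
      rw [e1, e2]
      exact adj_of_mem (Finset.mem_union_right _ (mem_ee'.2 ⟨by omega, by omega, by omega⟩))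

lemma phi_bwd (hM : IsNoncrossingMatching n M) (hn : 1 ≤ n) :
    ∀ p ∈ M ∪ ee n, ChordConn (phi n M ∪ btn n) (down n p.1) (down n p.2) := by
  rintro ⟨a, b⟩ hp
  rcases Finset.mem_union.1 hp with hm | he
  · have hab := hM.1.1 _ hm
    simp only at hab
    by_cases h1 : a = 1
    · subst h1
      have e1 : down n 1 = 2 * n := by unfold down; split_ifs <;> omega
      have e2 : down n b = b - 1 := by unfold down; split_ifs <;> omega
      rw [e1, e2]
      refine adj_of_mem' (Finset.mem_union_left _ (Finset.mem_union_left _ ?_))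
      exact Finset.mem_image.2 ⟨(1, b), Finset.mem_filter.2 ⟨hm, rfl⟩, rfl⟩
    · have e1 : down n a = a - 1 := by unfold down; split_ifs <;> omega
      have e2 : down n b = b - 1 := by unfold down; split_ifs <;> omega
      rw [e1, e2]
      refine adj_of_mem (Finset.mem_union_left _ (Finset.mem_union_right _ ?_))
      exact Finset.mem_image.2 ⟨(a, b), Finset.mem_filter.2 ⟨hm, h1⟩, rfl⟩
  · rw [mem_ee'] at he
    obtain ⟨hpar, rfl, hub⟩ := he
    by_cases h1 : a = 1
    · subst h1
      have e1 : down n 1 = 2 * n := by unfold down; split_ifs <;> omega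
      have e2 : down n 2 = 1 := by unfold down; split_ifs <;> omega
      rw [e1, e2]
      exact adj_of_mem' (Finset.mem_union_right _ (btn_wrap_mem hn))
    · have e1 : down n a = a - 1 := by unfold down; split_ifs <;> omega
      have e2 : down n (a + 1) = a := by unfold down; split_ifs <;> omega
      rw [e1, e2]
      refine adj_of_mem (Finset.mem_union_right _ ?_)
      exact (mem_btn' hn).2 (Or.inr ⟨by omega, by omega, by omega, by omega⟩)

lemma phi_O_iff (hM : IsNoncrossingMatching n M) (hn : 1 ≤ n) {x y : ℕ}
    (hx0 : 1 ≤ x) (hy0 : 1 ≤ y) (hx : x ≤ 2 * n - 1) (hy : y ≤ 2 * n - 1) :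
    ChordConn (phi n M ∪ btn n) x y ↔ ChordConn (M ∪ ee n) (x + 1) (y + 1) := by
  constructor
  · intro h
    have := conn_map (up n) (fun a b hab => by
      rcases hab with h1 | h1
      · exact phi_fwd hM hn _ h1
      · exact chordConn_symm (phi_fwd hM hn _ h1)) h
    have e1 : up n x = x + 1 := by unfold up; split_ifs <;> omega
    have e2 : up n y = y + 1 := by unfold up; split_ifs <;> omega
    rwa [e1, e2] at this
  · intro h
    have := conn_map (down n) (fun a b hab => by
      rcases hab with h1 | h1
      · exact phi_bwd hM hn _ h1
      · exact chordConn_symm (phi_bwd hM hn _ h1)) h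
    have e1 : down n (x + 1) = x := by unfold down; split_ifs <;> omega
    have e2 : down n (y + 1) = y := by unfold down; split_ifs <;> omega
    rwa [e1, e2] at this

end Phi

section Assembly

lemma partition_ext {n : ℕ} (P₁ P₂ : Finpartition (Finset.univ : Finset (Fin n)))
    (h : ∀ i j, P₁.part i = P₁.part j ↔ P₂.part i = P₂.part j) : P₁ = P₂ := by
  have hpart : ∀ i, P₁.part i = P₂.part i := by
    intro i
    ext x
    rw [P₁.mem_part_iff_part_eq_part (Finset.mem_univ x) (Finset.mem_univ i),
      P₂.mem_part_iff_part_eq_part (Finset.mem_univ x) (Finset.mem_univ i)]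
    exact h x i
  apply Finpartition.ext
  ext t
  constructor
  · intro ht
    obtain ⟨a, ha⟩ := P₁.nonempty_of_mem_parts ht
    rw [← P₁.part_eq_of_mem ht ha, hpart]
    exact P₂.part_mem.mpr (Finset.mem_univ a)
  · intro ht
    obtain ⟨a, ha⟩ := P₂.nonempty_of_mem_parts ht
    rw [← P₂.part_eq_of_mem ht ha, ← hpart]
    exact P₁.part_mem.mpr (Finset.mem_univ a)

lemma le_part {n : ℕ} {P₁ P₂ : Finpartition (Finset.univ : Finset (Fin n))}
    (hle : P₁ ≤ P₂) {i j : Fin n} (h : P₁.part i = P₁.part j) :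
    P₂.part i = P₂.part j := by
  obtain ⟨c, hc, hsub⟩ := hle (P₁.part_mem.mpr (Finset.mem_univ i))
  have hi : P₂.part i = c :=
    P₂.part_eq_of_mem hc (hsub (P₁.mem_part (Finset.mem_univ i)))
  have hj : P₂.part j = c :=
    P₂.part_eq_of_mem hc (hsub (h ▸ P₁.mem_part (Finset.mem_univ j)))
  rw [hi, hj]

variable {n : ℕ} {P R : Finpartition (Finset.univ : Finset (Fin n))}

lemma js_even {i j : Fin n} :
    JointSame P R (2 * i.val) (2 * j.val) ↔ P.part i = P.part j := by
  constructor
  · rintro ⟨i', j', ⟨h1, h2, h3⟩ | ⟨h1, h2, h3⟩⟩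
    · have e1 : i' = i := Fin.ext (by omega)
      have e2 : j' = j := Fin.ext (by omega)
      rw [← e1, ← e2]; exact h3
    · omega
  · intro h; exact ⟨i, j, Or.inl ⟨rfl, rfl, h⟩⟩

lemma js_odd {i j : Fin n} :
    JointSame P R (2 * i.val + 1) (2 * j.val + 1) ↔ R.part i = R.part j := by
  constructor
  · rintro ⟨i', j', ⟨h1, h2, h3⟩ | ⟨h1, h2, h3⟩⟩
    · omega
    · have e1 : i' = i := Fin.ext (by omega)
      have e2 : j' = j := Fin.ext (by omega)
      rw [← e1, ← e2]; exact h3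
  · intro h; exact ⟨i, j, Or.inr ⟨rfl, rfl, h⟩⟩

lemma js_ne_eo {i j : Fin n} : ¬ JointSame P R (2 * i.val) (2 * j.val + 1) := by
  rintro ⟨i', j', ⟨h1, h2, h3⟩ | ⟨h1, h2, h3⟩⟩ <;> omega

lemma js_ne_oe {i j : Fin n} : ¬ JointSame P R (2 * i.val + 1) (2 * j.val) := by
  rintro ⟨i', j', ⟨h1, h2, h3⟩ | ⟨h1, h2, h3⟩⟩ <;> omega

end Assembly

end NCAux


open NCAux

/-- The bijection `ρ` from plane trees with `n` edges to `NC(n)` intertwines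
the cyclic shift `φ` with Kreweras complementation: `ρ(φ(T)) = κ(ρ(T))`. -/
theorem rho_phi_eq_kreweras_rho (n : ℕ) (k : NCP n → NCP n)
    (hk : IsKreweras k) (T : PlaneTree) (hT : T.edges = n) (P Q : NCP n)
    (hP : IsRho n T.toMatching P.1) (hQ : IsRho n (phi n T.toMatching) Q.1) :
    k P = Q := by
  subst hT
  have hM : IsNoncrossingMatching T.edges T.toMatching := toMatching_isNCM T
  set M := T.toMatching with hMdef
  have hQE : ∀ i j : Fin T.edges, Q.1.part i = Q.1.part j ↔
      ChordConn (M ∪ ee T.edges) (2 * i.val + 1 + 1) (2 * j.val + 1 + 1) := by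
    intro i j
    have hi := i.isLt
    have hj := j.isLt
    exact (hQ i j).trans
      (phi_O_iff hM (by omega) (by omega) (by omega) (by omega) (by omega))
  have main : ∀ i j : Fin T.edges, i.val < j.val →
      (k P).1.part i = (k P).1.part j → Q.1.part i = Q.1.part j := by
    intro i j hij hkij
    by_contra hQij
    have hi := i.isLt
    have hj := j.isLt
    have hnE : ¬ ChordConn (M ∪ ee T.edges) (2 * i.val + 1 + 1) (2 * j.val + 1 + 1) := by
      intro hc
      exact hQij ((hQE i j).2 hc)
    obtain ⟨x, y, hx1, hy1, hyb, hOxy, hcross⟩ := LB T.edges M hM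
      (2 * i.val + 1 + 1) (2 * j.val + 1 + 1)
      (by omega) (by omega) (by omega) (by omega) (by omega) hnE
    have hpx : (x - 1) / 2 < T.edges := by
      rcases hcross with ⟨f1, f2, f3⟩ | ⟨f1, f2, f3⟩ <;> omega
    have hqy : (y - 1) / 2 < T.edges := by omega
    have hxe : x = 2 * ((x - 1) / 2) + 1 := by omega
    have hye : y = 2 * ((y - 1) / 2) + 1 := by omega
    set p : Fin T.edges := ⟨(x - 1) / 2, hpx⟩ with hpdef
    set q : Fin T.edges := ⟨(y - 1) / 2, hqy⟩ with hqdef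
    have hxe' : x = 2 * p.val + 1 := hxe
    have hye' : y = 2 * q.val + 1 := hye
    have hPpq : P.1.part p = P.1.part q :=
      (hP p q).2 (by rw [← hxe', ← hye']; exact hOxy)
    have hJ := (hk P).1
    rcases hcross with ⟨f1, f2, f3⟩ | ⟨f1, f2, f3⟩
    · exact hJ ⟨2 * p.val, 2 * i.val + 1, 2 * q.val, 2 * j.val + 1,
        by omega, by omega, by omega,
        js_even.2 hPpq, js_odd.2 hkij, js_ne_eo⟩
    · exact hJ ⟨2 * i.val + 1, 2 * p.val, 2 * j.val + 1, 2 * q.val,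
        by omega, by omega, by omega,
        js_odd.2 hkij, js_even.2 hPpq, js_ne_oe⟩
  have hJNC : JointNoncrossing P.1 Q.1 := by
    rintro ⟨a, b, c, d, h1, h2, h3, jac, jbd, hnab⟩
    obtain ⟨i1, j1, hc1⟩ := jac
    obtain ⟨i2, j2, hc2⟩ := jbd
    rcases hc1 with ⟨rfl, rfl, hs1⟩ | ⟨rfl, rfl, hs1⟩ <;>
      rcases hc2 with ⟨rfl, rfl, hs2⟩ | ⟨rfl, rfl, hs2⟩
    · refine P.2 ⟨i1, i2, j1, j2, Fin.lt_def.2 (by omega), Fin.lt_def.2 (by omega),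
        Fin.lt_def.2 (by omega), hs1, hs2, ?_⟩
      intro he
      exact hnab (js_even.2 he)
    · have hO := (hP i1 j1).1 hs1
      have hE := (hQE i2 j2).1 hs2
      exact LA T.edges M hM (2 * i1.val + 1) (2 * j1.val + 1)
        (2 * i2.val + 1 + 1) (2 * j2.val + 1 + 1)
        (by omega) (by omega) (by omega) (by omega) hO hE (Or.inl (by omega))
    · have hO := (hP i2 j2).1 hs2
      have hE := (hQE i1 j1).1 hs1
      exact LA T.edges M hM (2 * i2.val + 1) (2 * j2.val + 1)
        (2 * i1.val + 1 + 1) (2 * j1.val + 1 + 1)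
        (by omega) (by omega) (by omega) (by omega) hO hE (Or.inr (by omega))
    · refine Q.2 ⟨i1, i2, j1, j2, Fin.lt_def.2 (by omega), Fin.lt_def.2 (by omega),
        Fin.lt_def.2 (by omega), hs1, hs2, ?_⟩
      intro he
      exact hnab (js_odd.2 he)
  have hle : Q.1 ≤ (k P).1 := (hk P).2 Q hJNC
  apply Subtype.ext
  apply partition_ext
  intro i j
  constructor
  · intro h
    rcases Nat.lt_trichotomy i.val j.val with hlt | heq | hgt
    · exact main i j hlt h
    · rw [show i = j from Fin.ext heq]
    · exact (main j i hgt h.symm).symm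
  · intro h
    exact le_part hle h
end

section
/- The total number of orbits of NC(n) under Kreweras complementation κ equals the number of (unrooted) planar trees with n edges. -/
open Finset

variable {n : ℕ}


abbrev FP (n : ℕ) := Finpartition (Finset.univ : Finset (Fin n))

lemma part_mem_part {P : FP n} {a b : Fin n} :
    b ∈ P.part a ↔ P.part b = P.part a := by
  constructor
  · intro hb
    exact P.part_eq_of_mem (P.part_mem.mpr (mem_univ a)) hb
  · intro h
    rw [← h]; exact P.mem_part (mem_univ b)

lemma part_ext {P Q : FP n} (h : ∀ a, P.part a = Q.part a) : P = Q := by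
  ext s
  constructor
  · intro hs
    obtain ⟨a, ha⟩ := P.nonempty_of_mem_parts hs
    have : P.part a = s := P.part_eq_of_mem hs ha
    rw [← this, h]
    exact Q.part_mem.mpr (mem_univ a)
  · intro hs
    obtain ⟨a, ha⟩ := Q.nonempty_of_mem_parts hs
    have : Q.part a = s := Q.part_eq_of_mem hs ha
    rw [← this, ← h]
    exact P.part_mem.mpr (mem_univ a)

/-- cyclic successor within the block -/
def nxt (P : FP n) (i : Fin n) : Fin n :=
  if h : ((P.part i).filter (fun k => i < k)).Nonempty
  then ((P.part i).filter (fun k => i < k)).min' h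
  else (P.part i).min' ⟨i, P.mem_part (mem_univ i)⟩

lemma nxt_mem (P : FP n) (i : Fin n) : nxt P i ∈ P.part i := by
  unfold nxt
  split_ifs with h
  · exact (mem_filter.mp (min'_mem _ h)).1
  · exact min'_mem _ _

lemma part_nxt (P : FP n) (i : Fin n) : P.part (nxt P i) = P.part i :=
  part_mem_part.mp (nxt_mem P i)

lemma nxt_cases (P : FP n) (i : Fin n) :
    (i < nxt P i ∧ ∀ k ∈ P.part i, i < k → nxt P i ≤ k) ∨
    (nxt P i ≤ i ∧ (∀ k ∈ P.part i, k ≤ i) ∧ ∀ k ∈ P.part i, nxt P i ≤ k) := by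
  unfold nxt
  split_ifs with h
  · left
    constructor
    · exact (mem_filter.mp (min'_mem _ h)).2
    · intro k hk hik
      exact min'_le _ _ (mem_filter.mpr ⟨hk, hik⟩)
  · right
    refine ⟨min'_le _ _ (P.mem_part (mem_univ i)), ?_, fun k hk => min'_le _ _ hk⟩
    intro k hk
    by_contra hc
    exact h ⟨k, mem_filter.mpr ⟨hk, not_le.mp hc⟩⟩

/-- uniqueness characterization of nxt -/
lemma nxt_eq (P : FP n) {i j : Fin n} (hj : j ∈ P.part i)
    (hc : (i < j ∧ ∀ k ∈ P.part i, i < k → j ≤ k) ∨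
          (j ≤ i ∧ (∀ k ∈ P.part i, k ≤ i) ∧ ∀ k ∈ P.part i, j ≤ k)) :
    nxt P i = j := by
  rcases nxt_cases P i with ⟨h1, h2⟩ | ⟨h1, h2, h3⟩ <;>
    rcases hc with ⟨g1, g2⟩ | ⟨g1, g2, g3⟩
  · exact le_antisymm (h2 j hj g1) (g2 _ (nxt_mem P i) h1)
  · exact absurd (g2 _ (nxt_mem P i)) (not_le.mpr h1)
  · exact absurd (h2 j hj) (not_le.mpr g1)
  · exact le_antisymm (h3 j hj) (g3 _ (nxt_mem P i))

lemma nxt_injective (P : FP n) : Function.Injective (nxt P) := by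
  intro i j hij
  by_contra hne
  have hpart : P.part i = P.part j := by
    rw [← part_nxt P i, hij, part_nxt]
  have hji : j ∈ P.part i := by rw [hpart]; exact P.mem_part (mem_univ j)
  have hij' : i ∈ P.part j := by rw [← hpart]; exact P.mem_part (mem_univ i)
  -- wlog i < j
  rcases lt_or_gt_of_ne hne with hlt | hlt
  all_goals
    rcases nxt_cases P i with ⟨a1, a2⟩ | ⟨a1, a2, a3⟩ <;>
      rcases nxt_cases P j with ⟨b1, b2⟩ | ⟨b1, b2, b3⟩ <;>
      rw [hij] at * <;>
      first
      | (exact absurd (a2 j hji (by omega)) (by omega))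
      | (exact absurd (b2 i hij' (by omega)) (by omega))
      | (exact absurd (b3 i hij') (by omega))
      | (exact absurd (a3 j hji) (by omega))
      | (exact absurd (a2 j hji) (by omega))
      | (exact absurd (b2 i hij') (by omega))

lemma nxt_surjective (P : FP n) : Function.Surjective (nxt P) :=
  Finite.surjective_of_injective (nxt_injective P)

/-- the sorted pair -/
def arc (u v : ℕ) : ℕ × ℕ := (min u v, max u v)

/-- the matching associated to a partition -/
def mtc (P : FP n) : Finset (ℕ × ℕ) :=
  univ.image fun i : Fin n => arc (2 * i.val + 2) (2 * (nxt P i).val + 1)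

lemma mem_mtc {P : FP n} {p : ℕ × ℕ} :
    p ∈ mtc P ↔ ∃ i : Fin n, p = arc (2 * i.val + 2) (2 * (nxt P i).val + 1) := by
  simp [mtc, eq_comm]

lemma arc_cover {u v k : ℕ} : ((arc u v).1 = k ∨ (arc u v).2 = k) ↔ (u = k ∨ v = k) := by
  unfold arc
  rcases le_total u v with h | h <;> simp [min_eq_left, max_eq_right, *] <;> omega

lemma mtc_isMatching (P : FP n) : IsMatching n (mtc P) := by
  constructor
  · intro p hp
    obtain ⟨i, rfl⟩ := mem_mtc.mp hp
    have hi := i.isLt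
    have hj := (nxt P i).isLt
    unfold arc
    constructor
    · simp only [ge_iff_le, le_min_iff]; omega
    constructor
    · rcases Nat.lt_or_ge (2 * i.val + 2) (2 * (nxt P i).val + 1) with h | h
      · rw [min_eq_left (le_of_lt h), max_eq_right (le_of_lt h)]; exact h
      · have h' : 2 * (nxt P i).val + 1 < 2 * i.val + 2 := by omega
        rw [min_eq_right (le_of_lt h'), max_eq_left (le_of_lt h')]; exact h'
    · simp only [max_le_iff]; omega
  · intro k hk1 hk2
    rcases Nat.even_or_odd k with he | ho
    · -- k even, k = 2u+2
      obtain ⟨u, hu⟩ : ∃ u : Fin n, k = 2 * u.val + 2 := by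
        obtain ⟨m, hm⟩ := he
        refine ⟨⟨m - 1, by omega⟩, by simp; omega⟩
      refine ⟨arc (2 * u.val + 2) (2 * (nxt P u).val + 1), ⟨mem_mtc.mpr ⟨u, rfl⟩, ?_⟩, ?_⟩
      · rw [arc_cover]; left; omega
      · rintro p ⟨hp, hcov⟩
        obtain ⟨i, rfl⟩ := mem_mtc.mp hp
        rw [arc_cover] at hcov
        have : i = u := by
          rcases hcov with h | h
          · exact Fin.ext (by omega)
          · omega
        rw [this]
    · -- k odd, k = 2j+1, j = nxt u
      obtain ⟨j, hj⟩ : ∃ j : Fin n, k = 2 * j.val + 1 := by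
        obtain ⟨m, hm⟩ := ho
        refine ⟨⟨m, by omega⟩, by simp; omega⟩
      obtain ⟨u, hu⟩ := nxt_surjective P j
      refine ⟨arc (2 * u.val + 2) (2 * (nxt P u).val + 1), ⟨mem_mtc.mpr ⟨u, rfl⟩, ?_⟩, ?_⟩
      · rw [arc_cover]; right; rw [hu]; omega
      · rintro p ⟨hp, hcov⟩
        obtain ⟨i, rfl⟩ := mem_mtc.mp hp
        rw [arc_cover] at hcov
        have : i = u := by
          rcases hcov with h | h
          · omega
          · have : nxt P i = j := Fin.ext (by omega)
            exact nxt_injective P (by rw [this, hu])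
        rw [this]

lemma nxt_min_lt {P : FP n} {i : Fin n} (h : i < nxt P i) :
    ∀ k ∈ P.part i, i < k → nxt P i ≤ k := by
  rcases nxt_cases P i with ⟨_, h2⟩ | ⟨h1, _, _⟩
  · exact h2
  · exact absurd h (not_lt.mpr h1)

lemma nxt_wrap {P : FP n} {i : Fin n} (h : ¬ i < nxt P i) :
    (∀ k ∈ P.part i, k ≤ i) ∧ ∀ k ∈ P.part i, nxt P i ≤ k := by
  rcases nxt_cases P i with ⟨h1, _⟩ | ⟨_, h2, h3⟩
  · exact absurd h1 h
  · exact ⟨h2, h3⟩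

lemma arc_eq_of_lt {u v : ℕ} (h : u ≤ v) : arc u v = (u, v) := by
  unfold arc; rw [min_eq_left h, max_eq_right h]

lemma arc_eq_of_gt {u v : ℕ} (h : v ≤ u) : arc u v = (v, u) := by
  unfold arc; rw [min_eq_right h, max_eq_left h]

lemma mtc_noncrossing {P : FP n} (hP : IsNoncrossing P) :
    ¬ ∃ a b c d : ℕ, a < b ∧ b < c ∧ c < d ∧ (a, c) ∈ mtc P ∧ (b, d) ∈ mtc P := by
  rintro ⟨a, b, c, d, h1, h2, h3, hac, hbd⟩
  obtain ⟨i, hi⟩ := mem_mtc.mp hac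
  obtain ⟨p, hp⟩ := mem_mtc.mp hbd
  set j := nxt P i with hj
  set q := nxt P p with hq
  have hPji : P.part j = P.part i := part_nxt P i
  have hPqp : P.part q = P.part p := part_nxt P p
  rcases Nat.lt_or_ge i.val j.val with hij | hij <;>
    rcases Nat.lt_or_ge p.val q.val with hpq | hpq
  · -- i < j, p < q
    rw [arc_eq_of_lt (by omega), Prod.mk.injEq] at hi hp
    -- a = 2i+2, c = 2j+1, b = 2p+2, d = 2q+1
    have hip : i.val < p.val := by omega
    have hpj : p.val < j.val := by omega
    have hjq : j.val < q.val := by omega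
    by_cases hsame : P.part p = P.part i
    · have : j ≤ p := nxt_min_lt (by exact Fin.lt_def.mpr hij) p
        (part_mem_part.mpr hsame) (Fin.lt_def.mpr hip)
      exact absurd hpj (by omega)
    · exact hP ⟨i, p, j, q, Fin.lt_def.mpr hip, Fin.lt_def.mpr hpj, Fin.lt_def.mpr hjq,
        hPji.symm, hPqp.symm, fun hcon => hsame (by rw [← hcon])⟩
  · -- i < j, q ≤ p
    rw [arc_eq_of_lt (by omega)] at hi
    rw [arc_eq_of_gt (by omega)] at hp
    rw [Prod.mk.injEq] at hi hp
    -- a = 2i+2, c = 2j+1, b = 2q+1, d = 2p+2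
    have hiq : i.val < q.val := by omega
    have hqj : q.val < j.val := by omega
    have hjp : j.val ≤ p.val := by omega
    by_cases hsame : P.part p = P.part i
    · have hiInP : i ∈ P.part p := part_mem_part.mpr hsame.symm
      have hnlt : ¬ p < nxt P p := by
        rw [← hq]; intro hc; exact absurd (Fin.lt_def.mp hc) (by omega)
      have := (nxt_wrap hnlt).2 i hiInP
      have := Fin.le_def.mp this
      omega
    · have hjp' : j.val < p.val := by
        rcases Nat.lt_or_ge j.val p.val with h | h
        · exact h
        · exfalso
          have : j = p := Fin.ext (by omega)
          exact hsame (by rw [← this, hPji])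
      refine hP ⟨i, q, j, p, Fin.lt_def.mpr hiq, Fin.lt_def.mpr hqj, Fin.lt_def.mpr hjp',
        hPji.symm, hPqp, fun hcon => hsame ?_⟩
      rw [← hPqp, ← hcon]
  · -- j ≤ i, p < q
    rw [arc_eq_of_gt (by omega)] at hi
    rw [arc_eq_of_lt (by omega)] at hp
    rw [Prod.mk.injEq] at hi hp
    -- a = 2j+1, c = 2i+2, b = 2p+2, d = 2q+1
    have hjp : j.val ≤ p.val := by omega
    have hpi : p.val < i.val := by omega
    have hiq : i.val < q.val := by omega
    by_cases hsame : P.part p = P.part i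
    · have hqInI : q ∈ P.part i := by
        rw [part_mem_part, hPqp, hsame]
      have hnlt : ¬ i < nxt P i := by
        rw [← hj]; intro hc; exact absurd (Fin.lt_def.mp hc) (by omega)
      have := (nxt_wrap hnlt).1 q hqInI
      have := Fin.le_def.mp this
      omega
    · have hjp' : j.val < p.val := by
        rcases Nat.lt_or_ge j.val p.val with h | h
        · exact h
        · exfalso
          have : j = p := Fin.ext (by omega)
          exact hsame (by rw [← this, hPji])
      refine hP ⟨j, p, i, q, Fin.lt_def.mpr hjp', Fin.lt_def.mpr hpi, Fin.lt_def.mpr hiq,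
        hPji, hPqp.symm, fun hcon => hsame ?_⟩
      rw [hPji] at hcon
      rw [← hcon]
  · -- j ≤ i, q ≤ p
    rw [arc_eq_of_gt (by omega)] at hi
    rw [arc_eq_of_gt (by omega)] at hp
    rw [Prod.mk.injEq] at hi hp
    -- a = 2j+1, c = 2i+2, b = 2q+1, d = 2p+2
    have hjq : j.val < q.val := by omega
    have hqi : q.val ≤ i.val := by omega
    have hip : i.val < p.val := by omega
    by_cases hsame : P.part p = P.part i
    · have hpInI : p ∈ P.part i := part_mem_part.mpr hsame
      have hnlt : ¬ i < nxt P i := by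
        rw [← hj]; intro hc; exact absurd (Fin.lt_def.mp hc) (by omega)
      have := (nxt_wrap hnlt).1 p hpInI
      have := Fin.le_def.mp this
      omega
    · have hqi' : q.val < i.val := by
        rcases Nat.lt_or_ge q.val i.val with h | h
        · exact h
        · exfalso
          have : q = i := Fin.ext (by omega)
          exact hsame (by rw [← hPqp, this])
      refine hP ⟨j, q, i, p, Fin.lt_def.mpr hjq, Fin.lt_def.mpr hqi', Fin.lt_def.mpr hip,
        hPji, hPqp, fun hcon => hsame ?_⟩
      rw [hPji] at hcon
      rw [← hPqp, ← hcon]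

lemma part_rel_iff_eqvgen (P : FP n) (a b : Fin n) :
    P.part a = P.part b ↔ Relation.EqvGen (fun u v => nxt P u = v) a b := by
  constructor
  · intro hab
    -- first the key lemma for a ≤ b
    have key : ∀ m : ℕ, ∀ x y : Fin n, y.val - x.val = m → P.part x = P.part y → x ≤ y →
        Relation.EqvGen (fun u v => nxt P u = v) x y := by
      intro m
      induction m using Nat.strong_induction_on with
      | _ m ih =>
        intro x y hm hxy hle
        rcases eq_or_lt_of_le hle with rfl | hlt
        · exact Relation.EqvGen.refl x
        · have hyx : y ∈ P.part x := part_mem_part.mpr hxy.symm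
          have hnlt : x < nxt P x := by
            rcases nxt_cases P x with ⟨h1, _⟩ | ⟨_, h2, _⟩
            · exact h1
            · exact absurd (h2 y hyx) (not_le.mpr hlt)
          have hmin : nxt P x ≤ y := nxt_min_lt hnlt y hyx hlt
          have hpart : P.part (nxt P x) = P.part y := by rw [part_nxt, hxy]
          have hrec := ih (y.val - (nxt P x).val)
            (by have := Fin.lt_def.mp hnlt; have := Fin.le_def.mp hmin; omega)
            (nxt P x) y rfl hpart hmin
          exact Relation.EqvGen.trans _ _ _ (Relation.EqvGen.rel _ _ rfl) hrec
    rcases le_total a b with h | h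
    · exact key _ a b rfl hab h
    · exact Relation.EqvGen.symm _ _ (key _ b a rfl hab.symm h)
  · intro h
    induction h with
    | rel x y hxy => rw [← hxy, part_nxt]
    | refl x => rfl
    | symm x y _ ih => exact ih.symm
    | trans x y z _ _ ih1 ih2 => exact ih1.trans ih2

lemma mtc_nxt_eq {P Q : FP n} (h : mtc P = mtc Q) : nxt P = nxt Q := by
  funext i
  have h1 : arc (2 * i.val + 2) (2 * (nxt P i).val + 1) ∈ mtc Q := by
    rw [← h]; exact mem_mtc.mpr ⟨i, rfl⟩
  obtain ⟨u, hu⟩ := mem_mtc.mp h1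
  have := hu
  rw [Prod.ext_iff] at this
  unfold arc at this
  have hiu : i.val = u.val ∧ (nxt P i).val = (nxt Q u).val := by omega
  have : i = u := Fin.ext hiu.1
  subst this
  exact Fin.ext hiu.2

lemma mtc_injective {P Q : FP n} (h : mtc P = mtc Q) : P = Q := by
  have hn := mtc_nxt_eq h
  apply part_ext
  intro a
  ext b
  rw [part_mem_part, part_mem_part, part_rel_iff_eqvgen, part_rel_iff_eqvgen, hn]

lemma cover_unique {n : ℕ} {M : Finset (ℕ × ℕ)} (hM : IsMatching n M) {p q : ℕ × ℕ} {k : ℕ}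
    (hp : p ∈ M) (hq : q ∈ M) (hpk : p.1 = k ∨ p.2 = k) (hqk : q.1 = k ∨ q.2 = k) : p = q := by
  have hpb := hM.1 p hp
  have hk1 : 1 ≤ k := by omega
  have hk2 : k ≤ 2 * n := by omega
  obtain ⟨r, _, hr⟩ := hM.2 k hk1 hk2
  rw [hr p ⟨hp, hpk⟩, hr q ⟨hq, hqk⟩]

lemma sep_lemma {n : ℕ} {M : Finset (ℕ × ℕ)} (hM : IsNoncrossingMatching n M)
    {p q : ℕ × ℕ} (hp : p ∈ M) (hq : q ∈ M) (hne : q ≠ p) :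
    (p.1 < q.1 ∧ q.1 < p.2) ↔ (p.1 < q.2 ∧ q.2 < p.2) := by
  have hpb := hM.1.1 p hp
  have hqb := hM.1.1 q hq
  constructor
  · rintro ⟨h1, h2⟩
    have hne2 : q.2 ≠ p.2 := fun hc =>
      hne (cover_unique hM.1 hq hp (Or.inr hc) (Or.inr rfl))
    rcases Nat.lt_or_ge q.2 p.2 with h | h
    · exact ⟨by omega, h⟩
    · exfalso
      apply hM.2
      exact ⟨p.1, q.1, p.2, q.2, h1, h2, by omega,
        by rwa [Prod.mk.eta], by rwa [Prod.mk.eta]⟩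
  · rintro ⟨h1, h2⟩
    have hne1 : q.1 ≠ p.1 := fun hc =>
      hne (cover_unique hM.1 hq hp (Or.inl hc) (Or.inl rfl))
    rcases Nat.lt_or_ge p.1 q.1 with h | h
    · exact ⟨h, by omega⟩
    · exfalso
      apply hM.2
      exact ⟨q.1, p.1, q.2, p.2, by omega, h1, h2,
        by rwa [Prod.mk.eta], by rwa [Prod.mk.eta]⟩

lemma even_card_of_invol : ∀ (m : ℕ) (S : Finset ℕ) (f : ℕ → ℕ), S.card = m →
    (∀ x ∈ S, f x ∈ S ∧ f x ≠ x ∧ f (f x) = x) → Even S.card := by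
  intro m
  induction m using Nat.strong_induction_on with
  | _ m ih =>
    intro S f hcard hf
    rcases S.eq_empty_or_nonempty with rfl | ⟨x, hx⟩
    · simp
    · obtain ⟨hfx, hfxne, hffx⟩ := hf x hx
      set S' := (S.erase x).erase (f x) with hS'
      have hfxS : f x ∈ S.erase x := mem_erase.mpr ⟨hfxne, hfx⟩
      have hcard' : S'.card = S.card - 2 := by
        rw [hS', card_erase_of_mem hfxS, card_erase_of_mem hx]
        omega
      have hcard2 : 2 ≤ S.card := by
        have : 0 < (S.erase x).card := card_pos.mpr ⟨f x, hfxS⟩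
        have := card_erase_of_mem hx
        omega
      have hf' : ∀ y ∈ S', f y ∈ S' ∧ f y ≠ y ∧ f (f y) = y := by
        intro y hy
        rw [hS', mem_erase, mem_erase] at hy
        obtain ⟨hy1, hy2, hy3⟩ := hy
        obtain ⟨h1, h2, h3⟩ := hf y hy3
        refine ⟨?_, h2, h3⟩
        rw [hS', mem_erase, mem_erase]
        refine ⟨fun hc => hy2 ?_, fun hc => hy1 ?_, h1⟩
        · rw [← h3, hc, hffx]
        · rw [← h3, hc]
      have := ih (S'.card) (by omega) S' f rfl hf'
      rw [hcard'] at this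
      have : Even (S.card - 2) := this
      rcases this with ⟨t, ht⟩
      exact ⟨t + 1, by omega⟩

noncomputable def partner (M : Finset (ℕ × ℕ)) (k : ℕ) : ℕ :=
  if h : ∃ p, p ∈ M ∧ (p.1 = k ∨ p.2 = k) then
    (if h.choose.1 = k then h.choose.2 else h.choose.1) else 0

lemma partner_eq {n : ℕ} {M : Finset (ℕ × ℕ)} (hM : IsMatching n M) {p : ℕ × ℕ} {k : ℕ}
    (hp : p ∈ M) (hk : p.1 = k ∨ p.2 = k) :
    partner M k = if p.1 = k then p.2 else p.1 := by
  have h : ∃ q, q ∈ M ∧ (q.1 = k ∨ q.2 = k) := ⟨p, hp, hk⟩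
  have hch := h.choose_spec
  have : h.choose = p := cover_unique hM hch.1 hp hch.2 hk
  rw [partner, dif_pos h, this]

lemma partner_left {n : ℕ} {M : Finset (ℕ × ℕ)} (hM : IsMatching n M) {p : ℕ × ℕ}
    (hp : p ∈ M) : partner M p.1 = p.2 := by
  rw [partner_eq hM hp (Or.inl rfl), if_pos rfl]

lemma partner_right {n : ℕ} {M : Finset (ℕ × ℕ)} (hM : IsMatching n M) {p : ℕ × ℕ}
    (hp : p ∈ M) : partner M p.2 = p.1 := by
  have := hM.1 p hp
  rw [partner_eq hM hp (Or.inr rfl), if_neg (by omega)]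

lemma exists_cover {n : ℕ} {M : Finset (ℕ × ℕ)} (hM : IsMatching n M) {k : ℕ}
    (h1 : 1 ≤ k) (h2 : k ≤ 2 * n) : ∃ p, p ∈ M ∧ (p.1 = k ∨ p.2 = k) :=
  (hM.2 k h1 h2).exists

lemma parity_lemma {n : ℕ} {M : Finset (ℕ × ℕ)} (hM : IsNoncrossingMatching n M)
    {p : ℕ × ℕ} (hp : p ∈ M) : Odd (p.1 + p.2) := by
  have hpb := hM.1.1 p hp
  have heven : Even ((Finset.Ioo p.1 p.2).card) := by
    apply even_card_of_invol _ _ (partner M) rfl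
    intro x hx
    rw [Finset.mem_Ioo] at hx
    obtain ⟨q, hq, hqk⟩ := exists_cover hM.1 (k := x) (by omega) (by omega)
    have hqb := hM.1.1 q hq
    have hqnep : q ≠ p := by
      rintro rfl
      omega
    have hsep := sep_lemma hM hp hq hqnep
    rcases hqk with h | h
    · have hq2 : p.1 < q.2 ∧ q.2 < p.2 := hsep.mp (by omega)
      have hpart : partner M x = q.2 := by
        rw [← h]; exact partner_left hM.1 hq
      refine ⟨by rw [hpart]; exact Finset.mem_Ioo.mpr hq2, by omega, ?_⟩
      rw [hpart, partner_right hM.1 hq, h]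
    · have hq1 : p.1 < q.1 ∧ q.1 < p.2 := hsep.mpr (by omega)
      have hpart : partner M x = q.1 := by
        rw [← h]; exact partner_right hM.1 hq
      refine ⟨by rw [hpart]; exact Finset.mem_Ioo.mpr hq1, by omega, ?_⟩
      rw [hpart, partner_left hM.1 hq, h]
  rw [Nat.card_Ioo] at heven
  rcases heven with ⟨t, ht⟩
  exact ⟨p.1 + t, by omega⟩

lemma exists_max_block {n : ℕ} (P : FP n) (a b : Fin n) (hab : a < b) :
    ∃ u : Fin n, u ∈ P.part a ∧ u < b ∧ ∀ k ∈ P.part a, k < b → k ≤ u := by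
  have hane : ((P.part a).filter (fun j => j < b)).Nonempty :=
    ⟨a, mem_filter.mpr ⟨P.mem_part (mem_univ a), hab⟩⟩
  refine ⟨((P.part a).filter (fun j => j < b)).max' hane, ?_, ?_, ?_⟩
  · exact (mem_filter.mp (Finset.max'_mem _ hane)).1
  · exact (mem_filter.mp (Finset.max'_mem _ hane)).2
  · intro k hk hkb
    exact Finset.le_max' ((P.part a).filter (fun j => j < b)) k (mem_filter.mpr ⟨hk, hkb⟩)

lemma noncrossing_of_mtc {P : FP n}
    (h : ¬ ∃ a b c d : ℕ, a < b ∧ b < c ∧ c < d ∧ (a, c) ∈ mtc P ∧ (b, d) ∈ mtc P) :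
    IsNoncrossing P := by
  rintro ⟨a, b, c, d, hab, hbc, hcd, hac, hbd, hne⟩
  obtain ⟨u, hu_mem1, hu_mem2, humax⟩ := exists_max_block P a b hab
  have hpu : P.part u = P.part a := part_mem_part.mp hu_mem1
  set w := nxt P u with hw
  have hwmem : w ∈ P.part a := by rw [← hpu, hw]; exact nxt_mem P u
  have hcmem : c ∈ P.part u := by rw [hpu]; exact part_mem_part.mpr hac.symm
  have huw : u < w := by
    rcases nxt_cases P u with ⟨h1, _⟩ | ⟨_, h2, _⟩
    · rw [← hw] at h1; exact h1
    · exact absurd (h2 c hcmem) (not_le.mpr (lt_trans hu_mem2 hbc))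
  have hwc : w ≤ c := by
    rw [hw]
    exact nxt_min_lt (hw ▸ huw) c hcmem (lt_trans hu_mem2 hbc)
  have hbw : b < w := by
    rcases lt_trichotomy w b with hlt | heq | hgt
    · exact absurd (humax w hwmem hlt) (not_le.mpr huw)
    · exfalso
      apply hne
      rw [← part_mem_part.mp hwmem, heq]
    · exact hgt
  obtain ⟨u', hu'_mem1, hu'_mem2, hu'max⟩ := exists_max_block P b w hbw
  have hpu' : P.part u' = P.part b := part_mem_part.mp hu'_mem1
  set w' := nxt P u' with hw'
  have hw'mem : w' ∈ P.part b := by rw [← hpu', hw']; exact nxt_mem P u'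
  have hdmem : d ∈ P.part u' := by rw [hpu']; exact part_mem_part.mpr hbd.symm
  have hwd : w < d := lt_of_le_of_lt hwc hcd
  have hu'w' : u' < w' := by
    rcases nxt_cases P u' with ⟨h1, _⟩ | ⟨_, h2, _⟩
    · rw [← hw'] at h1; exact h1
    · exact absurd (h2 d hdmem) (not_le.mpr (lt_trans hu'_mem2 hwd))
  have hww' : w < w' := by
    rcases lt_trichotomy w' w with hlt | heq | hgt
    · exact absurd (hu'max w' hw'mem hlt) (not_le.mpr hu'w')
    · exfalso
      apply hne
      rw [← hpu, ← part_nxt P u, ← hw, ← heq, hw', part_nxt P u', hpu']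
    · exact hgt
  have huu' : u < u' := by
    have : b ≤ u' := hu'max b (P.mem_part (mem_univ b)) hbw
    exact lt_of_lt_of_le hu_mem2 this
  apply h
  have harc1 : ((2 * u.val + 2 : ℕ), (2 * w.val + 1 : ℕ)) ∈ mtc P := by
    have h0 : arc (2 * u.val + 2) (2 * (nxt P u).val + 1) ∈ mtc P := mem_mtc.mpr ⟨u, rfl⟩
    rwa [← hw, arc_eq_of_lt (by have := Fin.lt_def.mp huw; omega)] at h0
  have harc2 : ((2 * u'.val + 2 : ℕ), (2 * w'.val + 1 : ℕ)) ∈ mtc P := by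
    have h0 : arc (2 * u'.val + 2) (2 * (nxt P u').val + 1) ∈ mtc P := mem_mtc.mpr ⟨u', rfl⟩
    rwa [← hw', arc_eq_of_lt (by have := Fin.lt_def.mp hu'w'; omega)] at h0
  exact ⟨2 * u.val + 2, 2 * u'.val + 2, 2 * w.val + 1, 2 * w'.val + 1,
    by have := Fin.lt_def.mp huu'; omega,
    by have := Fin.lt_def.mp hu'_mem2; omega,
    by have := Fin.lt_def.mp hww'; omega,
    harc1, harc2⟩

lemma mtc_surjective {M : Finset (ℕ × ℕ)} (hM : IsNoncrossingMatching n M) :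
    ∃ P : FP n, mtc P = M := by
  classical
  have hf : ∀ i : Fin n, ∃ j : Fin n, arc (2 * i.val + 2) (2 * j.val + 1) ∈ M := by
    intro i
    have hi := i.isLt
    obtain ⟨p, hp, hpk⟩ := exists_cover hM.1 (k := 2 * i.val + 2) (by omega) (by omega)
    have hpar := parity_lemma hM hp
    have hpb := hM.1.1 p hp
    obtain ⟨t, ht⟩ := hpar
    rcases hpk with h1 | h2
    · have hx : p.2 % 2 = 1 := by omega
      have hlt : (p.2 - 1) / 2 < n := by omega
      refine ⟨⟨(p.2 - 1) / 2, hlt⟩, ?_⟩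
      have he : (2 : ℕ) * ((p.2 - 1) / 2) + 1 = p.2 := by omega
      rw [arc_eq_of_lt (by simp only [Fin.val_mk]; omega)]
      simp only [Fin.val_mk, he, ← h1, Prod.mk.eta]
      exact hp
    · have hx : p.1 % 2 = 1 := by omega
      have hlt : (p.1 - 1) / 2 < n := by omega
      refine ⟨⟨(p.1 - 1) / 2, hlt⟩, ?_⟩
      have he : (2 : ℕ) * ((p.1 - 1) / 2) + 1 = p.1 := by omega
      rw [arc_eq_of_gt (by simp only [Fin.val_mk]; omega)]
      simp only [Fin.val_mk, he, ← h2, Prod.mk.eta]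
      exact hp
  choose f hfspec using hf
  have hfarc : ∀ i : Fin n, arc (2 * i.val + 2) (2 * (f i).val + 1) ∈ M := hfspec
  have hinj : ∀ i i' : Fin n, f i = f i' → i = i' := by
    intro i i' hii
    have h1 := hfarc i
    have h2 := hfarc i'
    rw [hii] at h1
    have := cover_unique hM.1 h1 h2
      (by rw [arc_cover]; right; rfl) (by rw [arc_cover]; right; rfl)
    unfold arc at this
    rw [Prod.ext_iff] at this
    exact Fin.ext (by omega)
  set r : Fin n → Fin n → Prop := fun u v => f u = v with hr
  set s : Setoid (Fin n) := ⟨Relation.EqvGen r, Relation.EqvGen.is_equivalence r⟩ with hs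
  haveI : DecidableRel s.r := fun a b => Classical.propDecidable _
  set P : FP n := Finpartition.ofSetoid s with hP
  have hrel : ∀ x y : Fin n, y ∈ P.part x ↔ Relation.EqvGen r x y := by
    intro x y
    rw [hP]
    exact Finpartition.mem_part_ofSetoid_iff_rel
  have hnxt : ∀ i, nxt P i = f i := by
    intro i
    set j := f i with hj
    have hij_rel : Relation.EqvGen r i j := Relation.EqvGen.rel i j rfl
    have hjmem : j ∈ P.part i := (hrel i j).mpr hij_rel
    have hα := hfarc i
    rcases Nat.lt_or_ge i.val j.val with hij | hij
    · -- non-wrap case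
      have hαeq : ((2 * i.val + 2 : ℕ), (2 * j.val + 1 : ℕ)) ∈ M := by
        rw [← arc_eq_of_lt (by omega)]; exact hα
      have hinv : ∀ x y : Fin n, Relation.EqvGen r x y →
          ((i.val < x.val ∧ x.val < j.val) ↔ (i.val < y.val ∧ y.val < j.val)) := by
        intro x y hxy
        induction hxy with
        | rel x y hxy =>
          by_cases hxi : x = i
          · subst hxi
            have : y = j := by rw [← hxy]
            subst this
            omega
          · have hβ := hfarc x
            have hyfx : y = f x := hxy.symm
            have hne : arc (2 * x.val + 2) (2 * (f x).val + 1) ≠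
                ((2 * i.val + 2 : ℕ), (2 * j.val + 1 : ℕ)) := by
              intro hc
              apply hxi
              unfold arc at hc
              rw [Prod.ext_iff] at hc
              exact Fin.ext (by omega)
            have hsep := sep_lemma hM hαeq hβ hne
            rw [hyfx]
            rcases le_total (2 * x.val + 2) (2 * (f x).val + 1) with ho | ho
            · rw [arc_eq_of_lt ho] at hsep
              simp only [] at hsep
              omega
            · rw [arc_eq_of_gt ho] at hsep
              simp only [] at hsep
              omega
        | refl x => exact Iff.rfl
        | symm _ _ _ ih => exact ih.symm
        | trans _ _ _ _ _ ih1 ih2 => exact ih1.trans ih2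
      apply nxt_eq P hjmem
      left
      refine ⟨Fin.lt_def.mpr hij, ?_⟩
      intro k hk hik
      have := hinv i k ((hrel i k).mp hk)
      have h1 := Fin.lt_def.mp hik
      rw [Fin.le_def]
      omega
    · -- wrap case : j ≤ i
      have hαeq : ((2 * j.val + 1 : ℕ), (2 * i.val + 2 : ℕ)) ∈ M := by
        rw [← arc_eq_of_gt (by omega)]; exact hα
      have hinv : ∀ x y : Fin n, Relation.EqvGen r x y →
          ((j.val ≤ x.val ∧ x.val ≤ i.val) ↔ (j.val ≤ y.val ∧ y.val ≤ i.val)) := by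
        intro x y hxy
        induction hxy with
        | rel x y hxy =>
          by_cases hxi : x = i
          · subst hxi
            have : y = j := by rw [← hxy]
            subst this
            omega
          · have hβ := hfarc x
            have hyfx : y = f x := hxy.symm
            have hyj : (f x).val ≠ j.val := by
              intro hc
              have hj' : f x = j := Fin.ext hc
              have := cover_unique hM.1 (hj' ▸ hβ) hαeq
                (by rw [arc_cover]; right; rfl) (Or.inl rfl)
              unfold arc at this
              rw [Prod.ext_iff] at this
              exact hxi (Fin.ext (by omega))
            have hxi' : x.val ≠ i.val := fun hc => hxi (Fin.ext hc)
            have hne : arc (2 * x.val + 2) (2 * (f x).val + 1) ≠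
                ((2 * j.val + 1 : ℕ), (2 * i.val + 2 : ℕ)) := by
              intro hc
              unfold arc at hc
              rw [Prod.ext_iff] at hc
              exact hxi' (by omega)
            have hsep := sep_lemma hM hαeq hβ hne
            rw [hyfx]
            rcases le_total (2 * x.val + 2) (2 * (f x).val + 1) with ho | ho
            · rw [arc_eq_of_lt ho] at hsep
              simp only [] at hsep
              omega
            · rw [arc_eq_of_gt ho] at hsep
              simp only [] at hsep
              omega
        | refl x => exact Iff.rfl
        | symm _ _ _ ih => exact ih.symm
        | trans _ _ _ _ _ ih1 ih2 => exact ih1.trans ih2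
      apply nxt_eq P hjmem
      right
      have hIi : ∀ k ∈ P.part i, j.val ≤ k.val ∧ k.val ≤ i.val := by
        intro k hk
        have := hinv i k ((hrel i k).mp hk)
        omega
      refine ⟨Fin.le_def.mpr hij, ?_, ?_⟩
      · intro k hk
        exact Fin.le_def.mpr (hIi k hk).2
      · intro k hk
        exact Fin.le_def.mpr (hIi k hk).1
  refine ⟨P, ?_⟩
  ext p
  constructor
  · intro hp
    obtain ⟨i, rfl⟩ := mem_mtc.mp hp
    rw [hnxt]
    exact hfarc i
  · intro hp
    have hpb := hM.1.1 p hp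
    have hpar := parity_lemma hM hp
    obtain ⟨t, ht⟩ := hpar
    rcases Nat.even_or_odd p.1 with he | ho
    · obtain ⟨m, hm⟩ := he
      have hu : ∃ u : Fin n, p.1 = 2 * u.val + 2 := ⟨⟨(p.1 - 2) / 2, by omega⟩, by simp; omega⟩
      obtain ⟨u, hu⟩ := hu
      have := cover_unique hM.1 hp (hfarc u) (Or.inl hu)
        (by rw [arc_cover]; left; rfl)
      rw [this]
      exact mem_mtc.mpr ⟨u, by rw [hnxt]⟩
    · have hp2even : Even p.2 := by
        rcases Nat.even_or_odd p.2 with h | h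
        · exact h
        · exfalso
          obtain ⟨t1, ht1⟩ := ho
          obtain ⟨t2, ht2⟩ := h
          omega
      obtain ⟨m, hm⟩ := hp2even
      have hu : ∃ u : Fin n, p.2 = 2 * u.val + 2 := ⟨⟨(p.2 - 2) / 2, by omega⟩, by simp; omega⟩
      obtain ⟨u, hu⟩ := hu
      have := cover_unique hM.1 hp (hfarc u) (Or.inr hu)
        (by rw [arc_cover]; left; rfl)
      rw [this]
      exact mem_mtc.mpr ⟨u, by rw [hnxt]⟩

/-- x and y are in the same block of the Kreweras complement (combinatorially) -/
def SameK (P : FP n) (x y : Fin n) : Prop :=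
  ∀ p q : Fin n, P.part p = P.part q →
    ((min x.val y.val < p.val ∧ p.val ≤ max x.val y.val) ↔
     (min x.val y.val < q.val ∧ q.val ≤ max x.val y.val))

lemma jointSame_parity {P Q : FP n} {a b : ℕ} (ha : a % 2 = 0) (hb : b % 2 = 1) :
    ¬ JointSame P Q a b := by
  rintro ⟨i, j, ⟨h1, h2, _⟩ | ⟨h1, h2, _⟩⟩ <;> omega

/-- the pair partition with block {x, y} -/
def pairRel (x y : Fin n) (u v : Fin n) : Prop :=
  u = v ∨ ((u = x ∨ u = y) ∧ (v = x ∨ v = y))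

lemma pairRel_equiv (x y : Fin n) : Equivalence (pairRel x y) := by
  constructor
  · intro u; left; rfl
  · rintro u v (rfl | ⟨h1, h2⟩)
    · left; rfl
    · right; exact ⟨h2, h1⟩
  · rintro u v w (rfl | ⟨h1, h2⟩) (rfl | ⟨h3, h4⟩)
    · left; rfl
    · right; exact ⟨h3, h4⟩
    · right; exact ⟨h1, h2⟩
    · right; exact ⟨h1, h4⟩

noncomputable def pairPart (x y : Fin n) : FP n :=
  @Finpartition.ofSetoid (Fin n) _ _ (Setoid.mk (pairRel x y) (pairRel_equiv x y))
    (fun a b => Classical.propDecidable _)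

lemma pairPart_mem {x y u v : Fin n} : v ∈ (pairPart x y).part u ↔ pairRel x y u v := by
  letI : DecidableRel (Setoid.mk (pairRel x y) (pairRel_equiv x y)).r :=
    fun a b => Classical.propDecidable _
  exact Finpartition.mem_part_ofSetoid_iff_rel

lemma pairPart_rel {x y u v : Fin n} :
    (pairPart x y).part u = (pairPart x y).part v ↔ pairRel x y u v := by
  rw [← part_mem_part, pairPart_mem]
  constructor
  · exact (pairRel_equiv x y).symm
  · exact (pairRel_equiv x y).symm

lemma pairPart_noncrossing (x y : Fin n) : IsNoncrossing (pairPart x y) := by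
  rintro ⟨a, b, c, d, h1, h2, h3, hac, hbd, hne⟩
  rw [pairPart_rel] at hac hbd
  rcases hac with rfl | ⟨ha, hc⟩
  · exact absurd rfl (ne_of_lt (h1.trans h2))
  · rcases hbd with rfl | ⟨hb, hd⟩
    · exact absurd rfl (ne_of_lt (h2.trans h3))
    · -- a, b, c all in {x, y}, a < b < c
      rcases ha with rfl | rfl <;> rcases hb with rfl | rfl <;> rcases hc with rfl | rfl <;>
        first
        | exact absurd rfl (ne_of_lt h1)
        | exact absurd rfl (ne_of_lt h2)
        | exact absurd rfl (ne_of_lt (h1.trans h2))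

lemma jointSame_parity' {P Q : FP n} {a b : ℕ} (ha : a % 2 = 1) (hb : b % 2 = 0) :
    ¬ JointSame P Q a b := by
  rintro ⟨i, j, ⟨h1, h2, _⟩ | ⟨h1, h2, _⟩⟩ <;> omega

lemma kreweras_rel {k : NCP n → NCP n} (hk : IsKreweras k) (P : NCP n) (x y : Fin n) :
    (k P).1.part x = (k P).1.part y ↔ SameK P.1 x y := by
  constructor
  · intro hxy
    have main : ∀ (x' y' : Fin n), x'.val ≤ y'.val →
        (k P).1.part x' = (k P).1.part y' →
        ∀ p q : Fin n, P.1.part p = P.1.part q →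
        (x'.val < p.val ∧ p.val ≤ y'.val) → (x'.val < q.val ∧ q.val ≤ y'.val) := by
      intro x' y' hle hsame p q hpq hp
      by_contra hq
      apply (hk P).1
      rcases Nat.lt_or_ge x'.val q.val with h | h
      · -- q > y'
        have hqy : y'.val < q.val := by omega
        exact ⟨2 * x'.val + 1, 2 * p.val, 2 * y'.val + 1, 2 * q.val,
          by omega, by omega, by omega,
          ⟨x', y', Or.inr ⟨rfl, rfl, hsame⟩⟩,
          ⟨p, q, Or.inl ⟨rfl, rfl, hpq⟩⟩,
          jointSame_parity' (by omega) (by omega)⟩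
      · -- q ≤ x'
        exact ⟨2 * q.val, 2 * x'.val + 1, 2 * p.val, 2 * y'.val + 1,
          by omega, by omega, by omega,
          ⟨q, p, Or.inl ⟨rfl, rfl, hpq.symm⟩⟩,
          ⟨x', y', Or.inr ⟨rfl, rfl, hsame⟩⟩,
          jointSame_parity (by omega) (by omega)⟩
    intro p q hpq
    rcases le_total x.val y.val with hle | hle
    · rw [min_eq_left hle, max_eq_right hle]
      exact ⟨main x y hle hxy p q hpq, main x y hle hxy q p hpq.symm⟩
    · rw [min_eq_right hle, max_eq_left hle]
      exact ⟨main y x hle hxy.symm p q hpq, main y x hle hxy.symm q p hpq.symm⟩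
  · intro hS
    have hJQ : JointNoncrossing P.1 (pairPart x y) := by
      rintro ⟨a, b, c, d, h1, h2, h3, hac, hbd, hnab⟩
      obtain ⟨i, j, hij⟩ := hac
      obtain ⟨p, q, hpq⟩ := hbd
      rcases hij with ⟨rfl, rfl, hPij⟩ | ⟨rfl, rfl, hQij⟩ <;>
        rcases hpq with ⟨rfl, rfl, hPpq⟩ | ⟨rfl, rfl, hQpq⟩
      · -- even-even : crossing in P
        apply hnab
        by_contra hPip
        apply P.2
        refine ⟨i, p, j, q, Fin.lt_def.mpr (by omega), Fin.lt_def.mpr (by omega),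
          Fin.lt_def.mpr (by omega), hPij, hPpq, fun hc => ?_⟩
        exact hPip ⟨i, p, Or.inl ⟨rfl, rfl, hc⟩⟩
      · -- even-odd
        have hpqne : p ≠ q := fun hc => by subst hc; omega
        rcases pairPart_rel.mp hQpq with hc | ⟨hp, hq⟩
        · exact hpqne hc
        · have hminmax : min x.val y.val = p.val ∧ max x.val y.val = q.val := by
            rcases hp with rfl | rfl <;> rcases hq with rfl | rfl <;> omega
          have := (hS j i hPij.symm).mp (by omega)
          omega
      · -- odd-even
        have hijne : i ≠ j := fun hc => by subst hc; omega
        rcases pairPart_rel.mp hQij with hc | ⟨hi, hj⟩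
        · exact hijne hc
        · have hminmax : min x.val y.val = i.val ∧ max x.val y.val = j.val := by
            rcases hi with rfl | rfl <;> rcases hj with rfl | rfl <;> omega
          have := (hS p q hPpq).mp (by omega)
          omega
      · -- odd-odd
        have hijne : i ≠ j := fun hc => by subst hc; omega
        have hpqne : p ≠ q := fun hc => by subst hc; omega
        rcases pairPart_rel.mp hQij with hc | ⟨hi, hj⟩
        · exact hijne hc
        · rcases pairPart_rel.mp hQpq with hc | ⟨hp, hq⟩
          · exact hpqne hc
          · rcases hi with rfl | rfl <;> rcases hj with rfl | rfl <;>
              rcases hp with rfl | rfl <;> omega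
    have hle := (hk P).2 ⟨pairPart x y, pairPart_noncrossing x y⟩ hJQ
    have hymem : y ∈ (pairPart x y).part x :=
      pairPart_mem.mpr (Or.inr ⟨Or.inl rfl, Or.inr rfl⟩)
    obtain ⟨c, hc, hsub⟩ := hle ((pairPart x y).part_mem.mpr (mem_univ x))
    have hxc : x ∈ c := hsub ((pairPart x y).mem_part (mem_univ x))
    have hyc : y ∈ c := hsub hymem
    rw [(k P).1.part_eq_of_mem hc hxc, (k P).1.part_eq_of_mem hc hyc]

def fpred (j : Fin n) : Fin n :=
  if h : j.val = 0 then ⟨n - 1, by have := j.2; omega⟩ else ⟨j.val - 1, by have := j.2; omega⟩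

lemma fpred_val (j : Fin n) : (fpred j).val = if j.val = 0 then n - 1 else j.val - 1 := by
  unfold fpred
  split_ifs <;> rfl

lemma nxt_k {k : NCP n → NCP n} (hk : IsKreweras k) (P : NCP n) (i : Fin n) :
    nxt (k P).1 (fpred (nxt P.1 i)) = i := by
  set K := (k P).1 with hK
  set j := nxt P.1 i with hj
  set jt := fpred j with hjt
  have hji : P.1.part j = P.1.part i := part_nxt P.1 i
  have hKmem : ∀ z x : Fin n, x ∈ K.part z ↔ SameK P.1 x z := by
    intro z x
    rw [part_mem_part, hK, kreweras_rel hk P x z]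
  have hin := i.2
  have hjn := j.2
  rcases Nat.lt_or_ge i.val j.val with hA | hBC
  · -- Case A : i < j
    have hjtv : jt.val = j.val - 1 := by rw [hjt, fpred_val, if_neg (by omega)]
    have hmin : ∀ p : Fin n, P.1.part p = P.1.part i → i < p → j ≤ p := by
      intro p h1 h2
      exact nxt_min_lt (by rw [← hj]; exact Fin.lt_def.mpr hA) p (part_mem_part.mpr h1) h2
    have hSa : SameK P.1 i jt := by
      have main : ∀ p q : Fin n, P.1.part p = P.1.part q →
          (i.val < p.val ∧ p.val ≤ jt.val) → (i.val < q.val ∧ q.val ≤ jt.val) := by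
        intro p q hpq hp
        by_contra hq
        have hnsame : ¬ P.1.part p = P.1.part i := by
          intro hc
          have := hmin p hc (Fin.lt_def.mpr (by omega))
          have := Fin.le_def.mp this
          omega
        have hqi : q.val ≠ i.val := by
          intro hc
          exact hnsame (by rw [hpq, Fin.ext hc])
        have hqj : q.val ≠ j.val := by
          intro hc
          exact hnsame (by rw [hpq, Fin.ext hc, hji])
        rcases Nat.lt_or_ge q.val i.val with h | h
        · exact P.2 ⟨q, i, p, j, Fin.lt_def.mpr (by omega), Fin.lt_def.mpr (by omega),
            Fin.lt_def.mpr (by omega), hpq.symm, hji.symm,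
            fun hc => hnsame (hpq.trans hc)⟩
        · have hqgt : j.val < q.val := by omega
          exact P.2 ⟨i, p, j, q, Fin.lt_def.mpr (by omega), Fin.lt_def.mpr (by omega),
            Fin.lt_def.mpr hqgt, hji.symm, hpq, fun hc => hnsame hc.symm⟩
      intro p q hpq
      have hm1 : min i.val jt.val = i.val := by omega
      have hm2 : max i.val jt.val = jt.val := by omega
      rw [hm1, hm2]
      exact ⟨main p q hpq, main q p hpq.symm⟩
    have hmem : i ∈ K.part jt := (hKmem jt i).mpr hSa
    apply nxt_eq K hmem
    right
    have hub : ∀ x ∈ K.part jt, x ≤ jt := by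
      intro x hx
      have hSx := (hKmem jt x).mp hx
      rw [Fin.le_def]
      by_contra hc
      have hc' : jt.val < x.val := by omega
      have := hSx j i hji
      omega
    have hlb : ∀ x ∈ K.part jt, i ≤ x := by
      intro x hx
      have hSx := (hKmem jt x).mp hx
      by_contra hc
      have hc' : x.val < i.val := Fin.lt_def.mp (not_le.mp hc)
      have := hSx i j hji.symm
      omega
    exact ⟨Fin.le_def.mpr (by omega), hub, hlb⟩
  · -- Case B / C : j ≤ i
    have hwrap := nxt_wrap (P := P.1) (i := i)
      (by rw [← hj]; exact fun hc => absurd (Fin.lt_def.mp hc) (by omega))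
    rw [← hj] at hwrap
    have hwub : ∀ p : Fin n, P.1.part p = P.1.part i → p.val ≤ i.val := by
      intro p h1
      exact Fin.le_def.mp (hwrap.1 p (part_mem_part.mpr h1))
    have hwlb : ∀ p : Fin n, P.1.part p = P.1.part i → j.val ≤ p.val := by
      intro p h1
      exact Fin.le_def.mp (hwrap.2 p (part_mem_part.mpr h1))
    rcases Nat.eq_zero_or_pos j.val with hC | hB
    · -- Case C : j = 0
      have hjtv : jt.val = n - 1 := by rw [hjt, fpred_val, if_pos hC]
      have hSa : SameK P.1 i jt := by
        have main : ∀ p q : Fin n, P.1.part p = P.1.part q →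
            (i.val < p.val ∧ p.val ≤ jt.val) → (i.val < q.val ∧ q.val ≤ jt.val) := by
          intro p q hpq hp
          by_contra hq
          have hnsame : ¬ P.1.part p = P.1.part i := by
            intro hc
            have := hwub p hc
            omega
          have hqi : q.val ≠ i.val := fun hc => hnsame (by rw [hpq, Fin.ext hc])
          have hqj : q.val ≠ j.val := fun hc => hnsame (by rw [hpq, Fin.ext hc, hji])
          have hq2 := q.2
          have hqlt : j.val < q.val ∧ q.val < i.val := by omega
          exact P.2 ⟨j, q, i, p, Fin.lt_def.mpr (by omega), Fin.lt_def.mpr (by omega),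
            Fin.lt_def.mpr (by omega), hji, hpq.symm,
            fun hc => hnsame (hpq.trans (hc.symm.trans hji))⟩
        intro p q hpq
        have hm1 : min i.val jt.val = i.val := by omega
        have hm2 : max i.val jt.val = jt.val := by omega
        rw [hm1, hm2]
        exact ⟨main p q hpq, main q p hpq.symm⟩
      have hmem : i ∈ K.part jt := (hKmem jt i).mpr hSa
      apply nxt_eq K hmem
      right
      refine ⟨Fin.le_def.mpr (by omega), ?_, ?_⟩
      · intro x _
        rw [Fin.le_def]
        have := x.2
        omega
      · intro x hx
        have hSx := (hKmem jt x).mp hx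
        by_contra hc
        have hc' : x.val < i.val := Fin.lt_def.mp (not_le.mp hc)
        have := hSx i j hji.symm
        omega
    · -- Case B : 1 ≤ j ≤ i
      have hjtv : jt.val = j.val - 1 := by rw [hjt, fpred_val, if_neg (by omega)]
      have hSa : SameK P.1 i jt := by
        have main : ∀ p q : Fin n, P.1.part p = P.1.part q →
            (jt.val < p.val ∧ p.val ≤ i.val) → (jt.val < q.val ∧ q.val ≤ i.val) := by
          intro p q hpq hp
          by_cases hsame : P.1.part p = P.1.part i
          · have h1 := hwub q (by rw [← hpq, hsame])
            have h2 := hwlb q (by rw [← hpq, hsame])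
            omega
          · have hpi : p.val ≠ i.val := fun hc => hsame (by rw [Fin.ext hc])
            have hpj : p.val ≠ j.val := fun hc => hsame (by rw [Fin.ext hc, hji])
            by_contra hq
            rcases Nat.lt_or_ge q.val j.val with h | h
            · exact P.2 ⟨q, j, p, i, Fin.lt_def.mpr (by omega), Fin.lt_def.mpr (by omega),
                Fin.lt_def.mpr (by omega), hpq.symm, hji,
                fun hc => hsame (hpq.trans (hc.trans hji))⟩
            · have hqgt : i.val < q.val := by omega
              exact P.2 ⟨j, p, i, q, Fin.lt_def.mpr (by omega), Fin.lt_def.mpr (by omega),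
                Fin.lt_def.mpr hqgt, hji, hpq, fun hc => hsame (hc.symm.trans hji)⟩
        intro p q hpq
        have hm1 : min i.val jt.val = jt.val := by omega
        have hm2 : max i.val jt.val = i.val := by omega
        rw [hm1, hm2]
        exact ⟨main p q hpq, main q p hpq.symm⟩
      have hmem : i ∈ K.part jt := (hKmem jt i).mpr hSa
      apply nxt_eq K hmem
      left
      refine ⟨Fin.lt_def.mpr (by omega), ?_⟩
      intro x hx hgt
      have hSx := (hKmem jt x).mp hx
      by_contra hc
      have hc' : x.val < i.val := Fin.lt_def.mp (not_le.mp hc)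
      have hgt' := Fin.lt_def.mp hgt
      have := hSx j i hji
      omega

lemma mtc_k {k : NCP n → NCP n} (hk : IsKreweras k) (P : NCP n) :
    mtc (k P).1 = phi n (mtc P.1) := by
  set K := (k P).1 with hK
  have key : ∀ i : Fin n, nxt K (fpred (nxt P.1 i)) = i := fun i => nxt_k hk P i
  have hinj : Function.Injective (fun i : Fin n => fpred (nxt P.1 i)) := by
    intro a b hab
    have h : nxt K (fpred (nxt P.1 a)) = nxt K (fpred (nxt P.1 b)) := by
      simp only at hab
      rw [hab]
    rwa [key, key] at h
  ext p
  unfold phi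
  rw [mem_union, mem_image, mem_image]
  constructor
  · intro hp
    obtain ⟨u, rfl⟩ := mem_mtc.mp hp
    obtain ⟨i, hi⟩ := Finite.surjective_of_injective hinj u
    simp only at hi
    have hnKu : nxt K u = i := by rw [← hi, key]
    rw [hnKu]
    set j := nxt P.1 i with hj
    have hin := i.2
    have hjn := j.2
    rcases Nat.eq_zero_or_pos j.val with hC | hB
    · left
      refine ⟨arc (2 * i.val + 2) (2 * j.val + 1), ?_, ?_⟩
      · rw [mem_filter]
        refine ⟨mem_mtc.mpr ⟨i, rfl⟩, ?_⟩
        rw [arc_eq_of_gt (by omega)]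
        omega
      · rw [arc_eq_of_gt (by omega)]
        have huv : u.val = n - 1 := by rw [← hi, fpred_val, if_pos hC]
        rw [arc_eq_of_gt (by omega)]
        rw [Prod.ext_iff]
        constructor <;> simp <;> omega
    · right
      refine ⟨arc (2 * i.val + 2) (2 * j.val + 1), ?_, ?_⟩
      · rw [mem_filter]
        refine ⟨mem_mtc.mpr ⟨i, rfl⟩, ?_⟩
        unfold arc
        omega
      · have huv : u.val = j.val - 1 := by rw [← hi, fpred_val, if_neg (by omega)]
        rcases Nat.lt_or_ge i.val j.val with h | h
        · rw [arc_eq_of_lt (by omega), arc_eq_of_gt (by omega)]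
          rw [Prod.ext_iff]
          constructor <;> simp <;> omega
        · rw [arc_eq_of_gt (by omega), arc_eq_of_lt (by omega)]
          rw [Prod.ext_iff]
          constructor <;> simp <;> omega
  · intro hp
    rcases hp with ⟨q, hq, heq⟩ | ⟨q, hq, heq⟩
    · rw [mem_filter] at hq
      obtain ⟨i, rfl⟩ := mem_mtc.mp hq.1
      set j := nxt P.1 i with hj
      have hin := i.2
      have hjn := j.2
      have hq1 := hq.2
      have hC : j.val = 0 := by
        unfold arc at hq1
        omega
      rw [arc_eq_of_gt (by omega)] at heq
      simp only at heq
      apply mem_mtc.mpr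
      refine ⟨fpred j, ?_⟩
      have huv : (fpred j).val = n - 1 := by rw [fpred_val, if_pos hC]
      rw [key]
      rw [arc_eq_of_gt (by omega), ← heq]
      rw [Prod.ext_iff]
      constructor <;> simp <;> omega
    · rw [mem_filter] at hq
      obtain ⟨i, rfl⟩ := mem_mtc.mp hq.1
      set j := nxt P.1 i with hj
      have hin := i.2
      have hjn := j.2
      have hq1 := hq.2
      have hB : 1 ≤ j.val := by
        by_contra hc
        apply hq1
        rw [arc_eq_of_gt (by omega)]
        omega
      apply mem_mtc.mpr
      refine ⟨fpred j, ?_⟩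
      have huv : (fpred j).val = j.val - 1 := by rw [fpred_val, if_neg (by omega)]
      rw [key, ← heq]
      rcases Nat.lt_or_ge i.val j.val with h | h
      · rw [arc_eq_of_lt (by omega), arc_eq_of_gt (by omega)]
        rw [Prod.ext_iff]
        constructor <;> simp <;> omega
      · rw [arc_eq_of_gt (by omega), arc_eq_of_lt (by omega)]
        rw [Prod.ext_iff]
        constructor <;> simp <;> omega


/-- The total number of orbits of `NC(n)` under Kreweras complementation equals
the number of unrooted planar trees with `n` edges, i.e. the number of orbits
of noncrossing perfect matchings on `2n` circularly arranged points under
rotation. -/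


theorem card_kreweras_orbits (n : ℕ) (k : NCP n → NCP n) (hk : IsKreweras k) :
    Nat.card (Quot fun P Q : NCP n => ∃ c : ℕ, k^[c] P = Q) =
      Nat.card (Quot fun M M' : {M : Finset (ℕ × ℕ) // IsNoncrossingMatching n M} =>
        ∃ c : ℕ, (phi n)^[c] M.1 = M'.1) := by
  have hbij : Function.Bijective (fun P : NCP n =>
      (⟨mtc P.1, mtc_isMatching P.1, mtc_noncrossing P.2⟩ :
        {M : Finset (ℕ × ℕ) // IsNoncrossingMatching n M})) := by
    constructor
    · intro P Q h
      exact Subtype.ext (mtc_injective (congrArg Subtype.val h))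
    · rintro ⟨M, hM⟩
      obtain ⟨P, hP⟩ := mtc_surjective hM
      have hnc : IsNoncrossing P := noncrossing_of_mtc (by rw [hP]; exact hM.2)
      exact ⟨⟨P, hnc⟩, Subtype.ext hP⟩
  have hiter : ∀ (c : ℕ) (P : NCP n), mtc ((k^[c]) P).1 = (phi n)^[c] (mtc P.1) := by
    intro c
    induction c with
    | zero => intro P; rfl
    | succ c ih =>
      intro P
      rw [Function.iterate_succ_apply', Function.iterate_succ_apply', mtc_k hk, ih]
  apply Nat.card_congr
  apply Quot.congr (Equiv.ofBijective _ hbij)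
  intro P Q
  constructor
  · rintro ⟨c, rfl⟩
    exact ⟨c, (hiter c P).symm⟩
  · rintro ⟨c, hc⟩
    refine ⟨c, Subtype.ext (mtc_injective ?_)⟩
    rw [hiter c P]
    exact hc
end
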